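/- arXiv:2103.01017 — 4 statements merged into one kernel-verified Lean document; each statement's English description precedes it below -/
import Mathlib

section
/- Let D be a strongly connected digraph, let u and v be vertices of D, and let P be a directed path from u to v in D. Then the digraph obtained from D by reversing every arc of P is strongly connected if and only if u two-reaches v in D. -/
/-- The list of arcs (consecutive pairs) of a list of vertices. -/
def listArcs {V : Type*} (p : List V) : List (V × V) := p.zip p.tail

/-- `p` is a directed path from `u` to `v` in the digraph with arc set `A`. -/
def IsDipath {V : Type*} (A : Finset (V × V)) (u v : V) (p : List V) : Prop :=
  p ≠ [] ∧ p.head? = some u ∧ p.getLast? = some v ∧ p.Nodup ∧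
    p.Chain' (fun a b => (a, b) ∈ A)

/-- Two paths (given as vertex lists) are arc-disjoint. -/
def ArcDisjoint {V : Type*} (p q : List V) : Prop :=
  ∀ e ∈ listArcs p, e ∉ listArcs q

/-- `u` reaches `v`: there is a directed path from `u` to `v`. -/
def Reaches {V : Type*} (A : Finset (V × V)) (u v : V) : Prop :=
  ∃ p, IsDipath A u v p

/-- `u` two-reaches `v`: there are two arc-disjoint directed paths from `u` to `v`. -/
def TwoReaches {V : Type*} (A : Finset (V × V)) (u v : V) : Prop :=
  ∃ p q, IsDipath A u v p ∧ IsDipath A u v q ∧ ArcDisjoint p q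

/-- A digraph is strongly connected if every vertex reaches every other vertex. -/
def StronglyConnected {V : Type*} (A : Finset (V × V)) : Prop :=
  ∀ u v : V, Reaches A u v

/-- The digraph obtained by reversing every arc of the path `p`. -/
def reverseAlong {V : Type*} [DecidableEq V] (A : Finset (V × V)) (p : List V) :
    Finset (V × V) :=
  (A \ (listArcs p).toFinset) ∪ ((listArcs p).map Prod.swap).toFinset

/-- The indegree of a vertex in the digraph with arc set `A`. -/
def inDeg {V : Type*} [DecidableEq V] (A : Finset (V × V)) (v : V) : ℕ :=
  (A.filter (fun e => e.2 = v)).card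

/-- The indegree sequence: the indegrees of all vertices in non-increasing order. -/
def degSeq (V : Type*) [Fintype V] [DecidableEq V] (A : Finset (V × V)) : List ℕ :=
  ((Finset.univ.val.map (inDeg A)).sort (· ≤ ·)).reverse

/-- `A` is an orientation of the simple graph `G`: every edge of `G` gets exactly one
direction, and every arc of `A` comes from an edge of `G`. -/
def IsOrientation {V : Type*} (G : SimpleGraph V) (A : Finset (V × V)) : Prop :=
  (∀ a b : V, G.Adj a b ↔ ((a, b) ∈ A ∨ (b, a) ∈ A)) ∧
    ∀ a b : V, ¬((a, b) ∈ A ∧ (b, a) ∈ A)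

/-- The underlying undirected simple graph of a digraph. -/
def underlying {V : Type*} (A : Finset (V × V)) : SimpleGraph V :=
  SimpleGraph.fromRel (fun a b => (a, b) ∈ A)

/-- `p` is a directed path from `u` to `v` all of whose vertices lie in `S`. -/
def IsDipathIn {V : Type*} (A : Finset (V × V)) (S : Set V) (u v : V) (p : List V) : Prop :=
  IsDipath A u v p ∧ ∀ x ∈ p, x ∈ S

/-- `u` reaches `v` within the induced subdigraph on `S`. -/
def ReachesWithin {V : Type*} (A : Finset (V × V)) (S : Set V) (u v : V) : Prop :=
  ∃ p, IsDipathIn A S u v p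


section ListLemmas
variable {V : Type*}

lemma listArcs_nil : listArcs ([] : List V) = [] := rfl
lemma listArcs_single (a : V) : listArcs [a] = [] := rfl
lemma listArcs_cons₂ (a b : V) (t : List V) :
    listArcs (a :: b :: t) = (a, b) :: listArcs (b :: t) := rfl

lemma mem_of_mem_arcs {l : List V} {e : V × V} (h : e ∈ listArcs l) :
    e.1 ∈ l ∧ e.2 ∈ l := by
  obtain ⟨h1, h2⟩ := List.of_mem_zip h
  exact ⟨h1, List.mem_of_mem_tail h2⟩

lemma arcs_subset_cons {l : List V} {e : V × V} (a : V) (h : e ∈ listArcs l) :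
    e ∈ listArcs (a :: l) := by
  cases l with
  | nil => simp [listArcs_nil] at h
  | cons b t => rw [listArcs_cons₂]; exact List.mem_cons_of_mem _ h

lemma arcs_append_right {e : V × V} (l₁ : List V) {l₂ : List V} (h : e ∈ listArcs l₂) :
    e ∈ listArcs (l₁ ++ l₂) := by
  induction l₁ with
  | nil => simpa using h
  | cons a t ih => exact arcs_subset_cons a ih

lemma arcs_append_left {e : V × V} {l₁ : List V} (l₂ : List V) (h : e ∈ listArcs l₁) :
    e ∈ listArcs (l₁ ++ l₂) := by
  induction l₁ with
  | nil => simp [listArcs_nil] at h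
  | cons a t ih =>
    cases t with
    | nil => simp [listArcs_single] at h
    | cons b t' =>
      rw [listArcs_cons₂] at h
      rcases List.mem_cons.1 h with h | h
      · subst h; exact List.mem_cons_self
      · exact arcs_subset_cons a (ih h)

lemma chain'_iff_arcs {R : V → V → Prop} {l : List V} :
    l.Chain' R ↔ ∀ e ∈ listArcs l, R e.1 e.2 := by
  induction l with
  | nil => exact ⟨fun _ => by simp [listArcs_nil], fun _ => List.isChain_nil⟩
  | cons a t ih =>
    cases t with
    | nil => exact ⟨fun _ => by simp [listArcs_single], fun _ => List.isChain_singleton _⟩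
    | cons b t' =>
      simp only [List.Chain'] at ih ⊢; rw [listArcs_cons₂, List.isChain_cons_cons, ih]
      constructor
      · rintro ⟨h1, h2⟩ e he
        rcases List.mem_cons.1 he with he | he
        · subst he; exact h1
        · exact h2 e he
      · intro h
        exact ⟨h (a, b) List.mem_cons_self, fun e he => h e (List.mem_cons_of_mem _ he)⟩

lemma arcs_nodup {l : List V} (h : l.Nodup) : (listArcs l).Nodup := by
  induction l with
  | nil => simp [listArcs_nil]
  | cons a t ih =>
    cases t with
    | nil => simp [listArcs_single]
    | cons b t' =>
      rw [listArcs_cons₂]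
      refine List.nodup_cons.2 ⟨fun hm => ?_, ih (List.nodup_cons.1 h).2⟩
      exact (List.nodup_cons.1 h).1 (mem_of_mem_arcs hm).1

end ListLemmas

section Extract
variable {V : Type*}

lemma exists_nodup_aux (n : ℕ) : ∀ l : List V, l.length ≤ n → l ≠ [] →
    ∃ m : List V, m ≠ [] ∧ m.head? = l.head? ∧ m.getLast? = l.getLast? ∧ m.Nodup ∧
      (∀ x ∈ m, x ∈ l) ∧ ∀ e ∈ listArcs m, e ∈ listArcs l := by
  induction n with
  | zero => intro l hl hne; cases l with
    | nil => exact absurd rfl hne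
    | cons a t => simp at hl
  | succ n ih =>
    rintro (_ | ⟨a, t⟩) hl hne
    · exact absurd rfl hne
    · by_cases ha : a ∈ t
      · obtain ⟨t₁, t₂, rfl⟩ := List.append_of_mem ha
        have hlen : (a :: t₂).length ≤ n := by
          simp at hl ⊢; omega
        obtain ⟨m, hm0, hm1, hm2, hm3, hm4, hm5⟩ := ih (a :: t₂) hlen (by simp)
        have heq : a :: (t₁ ++ a :: t₂) = (a :: t₁) ++ (a :: t₂) := by simp
        refine ⟨m, hm0, ?_, ?_, hm3, ?_, ?_⟩
        · simpa using hm1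
        · rw [hm2, heq, List.getLast?_append_of_ne_nil (l₁ := a :: t₁) (by simp)]
        · intro x hx
          have := hm4 x hx
          rcases List.mem_cons.1 this with h | h
          · simp [h]
          · simp [h]
        · intro e he
          rw [heq]
          exact arcs_append_right _ (hm5 e he)
      · cases t with
        | nil => exact ⟨[a], by simp, rfl, rfl, by simp, by simp, by simp [listArcs_single]⟩
        | cons b t' =>
          obtain ⟨m, hm0, hm1, hm2, hm3, hm4, hm5⟩ :=
            ih (b :: t') (by simp at hl ⊢; omega) (by simp)
          refine ⟨a :: m, by simp, by simp, ?_, ?_, ?_, ?_⟩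
          · cases m with
            | nil => exact absurd rfl hm0
            | cons c m' => rw [List.getLast?_cons_cons, hm2, List.getLast?_cons_cons]
          · exact List.nodup_cons.2 ⟨fun hx => ha (hm4 a hx), hm3⟩
          · intro x hx
            rcases List.mem_cons.1 hx with h | h
            · simp [h]
            · exact List.mem_cons_of_mem _ (hm4 x h)
          · intro e he
            cases m with
            | nil => exact absurd rfl hm0
            | cons c m' =>
              rw [listArcs_cons₂] at he
              have hc : c = b := by simpa using hm1
              rcases List.mem_cons.1 he with h | h
              · subst h; subst hc
                rw [listArcs_cons₂]; exact List.mem_cons_self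
              · exact arcs_subset_cons a (hm5 e h)

lemma exists_nodup {l : List V} (hne : l ≠ []) :
    ∃ m : List V, m ≠ [] ∧ m.head? = l.head? ∧ m.getLast? = l.getLast? ∧ m.Nodup ∧
      (∀ x ∈ m, x ∈ l) ∧ ∀ e ∈ listArcs m, e ∈ listArcs l :=
  exists_nodup_aux l.length l le_rfl hne

end Extract

section ReachLemmas
variable {V : Type*} {A B : Finset (V × V)} {u v w : V}

lemma reaches_of_walk {l : List V} (h0 : l ≠ []) (h1 : l.head? = some u)
    (h2 : l.getLast? = some v) (h3 : l.Chain' (fun a b => (a, b) ∈ A)) :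
    Reaches A u v := by
  obtain ⟨m, hm0, hm1, hm2, hm3, _, hm5⟩ := exists_nodup h0
  refine ⟨m, hm0, hm1.trans h1, hm2.trans h2, hm3, ?_⟩
  rw [chain'_iff_arcs]
  intro e he
  exact chain'_iff_arcs.1 h3 e (hm5 e he)

lemma reaches_refl (A : Finset (V × V)) (u : V) : Reaches A u u :=
  ⟨[u], by simp, rfl, rfl, by simp, List.isChain_singleton _⟩

lemma reaches_of_mem (h : (u, v) ∈ A) : Reaches A u v := by
  by_cases huv : u = v
  · subst huv; exact reaches_refl A u
  · exact ⟨[u, v], by simp, rfl, rfl, by simp [huv], List.isChain_pair.2 h⟩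

lemma walk_chain_append {l₁ l₂ : List V} {R : V → V → Prop} (h1 : l₁.Chain' R)
    (h2 : l₂.Chain' R) (hc : ∀ x ∈ l₁.getLast?, ∀ y ∈ l₂.head?, R x y) :
    (l₁ ++ l₂).Chain' R := List.IsChain.append h1 h2 hc

lemma reaches_trans (hab : Reaches A u v) (hbc : Reaches A v w) : Reaches A u w := by
  obtain ⟨l₁, h10, h11, h12, _, h14⟩ := hab
  obtain ⟨l₂, h20, h21, h22, _, h24⟩ := hbc
  cases l₂ with
  | nil => exact absurd rfl h20
  | cons y t =>
    have hy : y = v := by simpa using h21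
    subst hy
    cases t with
    | nil =>
      have hvw : y = w := by simpa using h22
      subst hvw
      exact ⟨l₁, h10, h11, h12, ‹l₁.Nodup›, h14⟩
    | cons z t' =>
      apply reaches_of_walk (l := l₁ ++ z :: t')
      · simp [h10]
      · cases l₁ with
        | nil => exact absurd rfl h10
        | cons a s => simpa using h11
      · rw [List.getLast?_append_of_ne_nil (l₁ := l₁) (by simp)]
        rw [List.getLast?_cons_cons] at h22
        exact h22
      · replace h24 := List.isChain_cons_cons.1 h24
        refine walk_chain_append h14 h24.2 ?_
        intro x hx y' hy'
        rw [h12] at hx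
        simp at hx hy'
        rw [← hx, ← hy']
        exact h24.1

lemma reaches_lift {l : List V} (h0 : l ≠ []) (h1 : l.head? = some u)
    (h2 : l.getLast? = some v) (h3 : l.Chain' (fun a b => (a, b) ∈ A))
    (hAB : ∀ a b : V, (a, b) ∈ A → Reaches B a b) : Reaches B u v := by
  induction l generalizing u with
  | nil => exact absurd rfl h0
  | cons a t ih =>
    have ha : a = u := by simpa using h1
    subst ha
    cases t with
    | nil =>
      have : a = v := by simpa using h2
      exact this ▸ reaches_refl B a
    | cons b t' =>
      replace h3 := List.isChain_cons_cons.1 h3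
      refine reaches_trans (hAB a b h3.1) (ih (by simp) rfl ?_ h3.2)
      rw [List.getLast?_cons_cons] at h2
      exact h2

end ReachLemmas

section Netd
variable {V : Type*} [DecidableEq V]

def netd (F : Multiset (V × V)) (x : V) : ℤ :=
  (Multiset.card (F.filter (fun e => e.1 = x)) : ℤ) -
    (Multiset.card (F.filter (fun e => e.2 = x)) : ℤ)

lemma netd_add (F G : Multiset (V × V)) (x : V) :
    netd (F + G) x = netd F x + netd G x := by
  simp [netd, Multiset.filter_add]; ring

lemma netd_sub {F G : Multiset (V × V)} (h : G ≤ F) (x : V) :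
    netd (F - G) x = netd F x - netd G x := by
  have := netd_add (F - G) G x
  rw [tsub_add_cancel_of_le h] at this
  omega

lemma netd_cons (e : V × V) (F : Multiset (V × V)) (x : V) :
    netd (e ::ₘ F) x = netd F x + (if e.1 = x then 1 else 0) - (if e.2 = x then 1 else 0) := by
  simp [netd, Multiset.filter_cons]
  split_ifs <;> simp <;> ring

lemma netd_swap (F : Multiset (V × V)) (x : V) :
    netd (F.map Prod.swap) x = - netd F x := by
  induction F using Multiset.induction_on with
  | empty => simp [netd]
  | cons e F ih =>
    rw [Multiset.map_cons, netd_cons, netd_cons, ih]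
    simp [Prod.swap]
    ring

lemma netd_arcs (l : List V) (x : V) :
    netd (listArcs l : Multiset (V × V)) x =
      (if l.head? = some x then 1 else 0) - (if l.getLast? = some x then 1 else 0) := by
  induction l with
  | nil => simp [listArcs_nil, netd]
  | cons a t ih =>
    cases t with
    | nil => simp [listArcs_single, netd]
    | cons b t' =>
      rw [listArcs_cons₂, List.getLast?_cons_cons]
      have : ((a, b) :: listArcs (b :: t') : Multiset (V × V)) =
          (a, b) ::ₘ (listArcs (b :: t') : Multiset (V × V)) := rfl
      rw [this, netd_cons, ih]
      simp only [List.head?_cons, Option.some.injEq]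
      split_ifs <;> omega

lemma netd_arcs' {l : List V} {u v : V} (h1 : l.head? = some u) (h2 : l.getLast? = some v)
    (x : V) :
    netd (listArcs l : Multiset (V × V)) x =
      (if u = x then 1 else 0) - (if v = x then 1 else 0) := by
  rw [netd_arcs, h1, h2]
  simp only [Option.some.injEq]

end Netd

section Walk
variable {V : Type*} [DecidableEq V]

lemma exists_walk_aux (n : ℕ) : ∀ (F : Multiset (V × V)), Multiset.card F ≤ n →
    ∀ (v s : V), (∀ x, x ≠ v → 0 ≤ netd F x) → (s = v ∨ 1 ≤ netd F s) →
    ∃ l : List V, l ≠ [] ∧ l.head? = some s ∧ l.getLast? = some v ∧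
      l.Chain' (fun a b => (a, b) ∈ F) := by
  induction n with
  | zero =>
    intro F hF v s hcons hs
    rcases hs with rfl | hs
    · exact ⟨[s], by simp, rfl, rfl, List.isChain_singleton _⟩
    · exfalso
      have : F = 0 := by
        rw [← Multiset.card_eq_zero]; omega
      subst this
      simp [netd] at hs
  | succ n ih =>
    intro F hF v s hcons hs
    rcases hs with rfl | hs
    · exact ⟨[s], by simp, rfl, rfl, List.isChain_singleton _⟩
    · have hout : 0 < Multiset.card (F.filter (fun e => e.1 = s)) := by
        by_contra h
        simp only [not_lt, Nat.le_zero, Multiset.card_eq_zero] at h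
        rw [netd, h] at hs
        simp at hs
        omega
      obtain ⟨e, he⟩ := Multiset.card_pos_iff_exists_mem.1 hout
      rw [Multiset.mem_filter] at he
      obtain ⟨heF, hes⟩ := he
      obtain ⟨e1, w⟩ := e
      simp only at hes
      subst hes
      have hcons' : ∀ x, netd (F.erase (e1, w)) x =
          netd F x - (if e1 = x then 1 else 0) + (if w = x then 1 else 0) := by
        intro x
        have := netd_cons (e1, w) (F.erase (e1, w)) x
        rw [Multiset.cons_erase heF] at this
        simp only at this
        omega
      have hcard : Multiset.card (F.erase (e1, w)) ≤ n := by
        have h1 : 0 < Multiset.card F := Multiset.card_pos_iff_exists_mem.2 ⟨_, heF⟩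
        rw [Multiset.card_erase_of_mem heF, Nat.pred_eq_sub_one]
        omega
      have h1 : ∀ x, x ≠ v → 0 ≤ netd (F.erase (e1, w)) x := by
        intro x hx
        rw [hcons' x]
        have h0 := hcons x hx
        by_cases hxs : e1 = x
        · have h1' : 1 ≤ netd F x := hxs ▸ hs
          split_ifs <;> omega
        · split_ifs <;> omega
      have h2 : w = v ∨ 1 ≤ netd (F.erase (e1, w)) w := by
        by_cases hwv : w = v
        · exact Or.inl hwv
        · right
          rw [hcons' w, if_pos rfl]
          have h0 := hcons w hwv
          by_cases hws : e1 = w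
          · have h1' : 1 ≤ netd F w := hws ▸ hs
            rw [if_pos hws]
            omega
          · rw [if_neg hws]
            omega
      obtain ⟨l, hl0, hl1, hl2, hl3⟩ := ih (F.erase (e1, w)) hcard v w h1 h2
      refine ⟨e1 :: l, by simp, rfl, ?_, ?_⟩
      · cases l with
        | nil => exact absurd rfl hl0
        | cons b t => rw [List.getLast?_cons_cons]; exact hl2
      · cases l with
        | nil => exact absurd rfl hl0
        | cons b t =>
          refine List.isChain_cons_cons.2 ?_
          constructor
          · have hb : b = w := by simpa using hl1
            rw [hb]
            exact heF
          · exact List.IsChain.imp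
              (fun a b h => Multiset.mem_of_le (Multiset.erase_le _ F) h) hl3

lemma exists_walk (F : Multiset (V × V)) (v s : V)
    (hcons : ∀ x, x ≠ v → 0 ≤ netd F x) (hs : s = v ∨ 1 ≤ netd F s) :
    ∃ l : List V, l ≠ [] ∧ l.head? = some s ∧ l.getLast? = some v ∧
      l.Chain' (fun a b => (a, b) ∈ F) :=
  exists_walk_aux (Multiset.card F) F le_rfl v s hcons hs

end Walk

section RevAlong
variable {V : Type*} [DecidableEq V]

lemma mem_reverseAlong {A : Finset (V × V)} {p : List V} {e : V × V} :
    e ∈ reverseAlong A p ↔ (e ∈ A ∧ e ∉ listArcs p) ∨ Prod.swap e ∈ listArcs p := by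
  simp only [reverseAlong, Finset.mem_union, Finset.mem_sdiff, List.mem_toFinset,
    List.mem_map]
  constructor
  · rintro (⟨h1, h2⟩ | ⟨f, hf, rfl⟩)
    · exact Or.inl ⟨h1, h2⟩
    · right; rwa [Prod.swap_swap]
  · rintro (⟨h1, h2⟩ | h)
    · exact Or.inl ⟨h1, h2⟩
    · exact Or.inr ⟨Prod.swap e, h, Prod.swap_swap e⟩

end RevAlong

/-- Reversing a directed path from `u` to `v` in a strongly connected digraph yields a
strongly connected digraph if and only if `u` two-reaches `v`. -/
theorem stmt_0 {V : Type*} [Fintype V] [DecidableEq V] (A : Finset (V × V))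
    (hsc : StronglyConnected A) (u v : V) (p : List V) (hp : IsDipath A u v p) :
    StronglyConnected (reverseAlong A p) ↔ TwoReaches A u v := by
  obtain ⟨hp0, hp1, hp2, hp3, hp5⟩ := hp
  have hEA : ∀ e ∈ listArcs p, e ∈ A := fun e he => chain'_iff_arcs.1 hp5 e he
  constructor
  · -- strong connectivity of the reversal implies two-reachability
    intro hsc'
    by_cases huv : u = v
    · subst huv
      exact ⟨[u], [u], ⟨by simp, rfl, rfl, by simp, List.isChain_singleton _⟩,
        ⟨by simp, rfl, rfl, by simp, List.isChain_singleton _⟩, by simp [ArcDisjoint, listArcs_single]⟩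
    · obtain ⟨q, hq0, hq1, hq2, hq3, hq5⟩ := hsc' u v
      have hQA' : ∀ e ∈ listArcs q, e ∈ reverseAlong A p :=
        fun e he => chain'_iff_arcs.1 hq5 e he
      set Em : Multiset (V × V) := (listArcs p : Multiset (V × V)) with hEmdef
      set Qm : Multiset (V × V) := (listArcs q : Multiset (V × V)) with hQmdef
      set Ffwd : Multiset (V × V) := Qm.filter (fun e => e ∈ A ∧ e ∉ listArcs p) with hFfwddef
      set Qback : Multiset (V × V) := Qm.filter (fun e => ¬(e ∈ A ∧ e ∉ listArcs p))
        with hQbackdef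
      have hsplit : Ffwd + Qback = Qm := Multiset.filter_add_not _ _
      set Fcm : Multiset (V × V) := Qback.map Prod.swap with hFcmdef
      have hQm_nodup : Qm.Nodup := by
        rw [hQmdef, Multiset.coe_nodup]; exact arcs_nodup hq3
      have hEm_nodup : Em.Nodup := by
        rw [hEmdef, Multiset.coe_nodup]; exact arcs_nodup hp3
      have hQback_mem : ∀ e ∈ Qback, Prod.swap e ∈ listArcs p := by
        intro e he
        rw [hQbackdef, Multiset.mem_filter] at he
        obtain ⟨heQ, hne⟩ := he
        have heQ' : e ∈ listArcs q := by rwa [hQmdef, Multiset.mem_coe] at heQ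
        rcases mem_reverseAlong.1 (hQA' e heQ') with h | h
        · exact absurd h hne
        · exact h
      have hFcm_nodup : Fcm.Nodup :=
        (Multiset.Nodup.filter _ hQm_nodup).map Prod.swap_injective
      have hFcm_le : Fcm ≤ Em := by
        rw [Multiset.le_iff_subset hFcm_nodup]
        intro a ha
        obtain ⟨e, he, rfl⟩ := Multiset.mem_map.1 ha
        rw [hEmdef, Multiset.mem_coe]
        exact hQback_mem e he
      set F : Multiset (V × V) := Ffwd + (Em - Fcm) with hFdef
      have hnetF : ∀ x, netd F x =
          2 * ((if u = x then 1 else 0) - (if v = x then 1 else 0)) := by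
        intro x
        have h1 : netd Qm x = netd Ffwd x + netd Qback x := by
          rw [← netd_add, hsplit]
        have h2 : netd Qm x = (if u = x then 1 else 0) - (if v = x then 1 else 0) :=
          netd_arcs' hq1 hq2 x
        have h3 : netd Em x = (if u = x then 1 else 0) - (if v = x then 1 else 0) :=
          netd_arcs' hp1 hp2 x
        have h4 : netd Fcm x = - netd Qback x := netd_swap _ x
        rw [hFdef, netd_add, netd_sub hFcm_le, h3, h4]
        omega
      have hFA : ∀ e ∈ F, e ∈ A := by
        intro e he
        rcases Multiset.mem_add.1 he with h | h
        · exact (Multiset.mem_filter.1 h).2.1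
        · have : e ∈ Em := Multiset.mem_of_le tsub_le_self h
          rw [hEmdef, Multiset.mem_coe] at this
          exact hEA e this
      have hFnodup : F.Nodup := by
        rw [hFdef, Multiset.nodup_add]
        refine ⟨Multiset.Nodup.filter _ hQm_nodup,
          Multiset.nodup_of_le tsub_le_self hEm_nodup, ?_⟩
        rw [Multiset.disjoint_left]
        intro a ha ha'
        have h1 : a ∉ listArcs p := (Multiset.mem_filter.1 ha).2.2
        have h2 : a ∈ Em := Multiset.mem_of_le tsub_le_self ha'
        rw [hEmdef, Multiset.mem_coe] at h2
        exact h1 h2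
      have hvu : ¬ (v = u) := fun h => huv h.symm
      obtain ⟨l₁, hl10, hl11, hl12, hl13⟩ := exists_walk F v u
        (by
          intro x hx
          have hvx : ¬ (v = x) := fun h => hx h.symm
          rw [hnetF, if_neg hvx]
          split_ifs <;> norm_num)
        (Or.inr (by rw [hnetF, if_pos rfl, if_neg hvu]; norm_num))
      obtain ⟨r₁, hr10, hr11, hr12, hr13, _, hr15⟩ := exists_nodup hl10
      have hr1F : ∀ e ∈ listArcs r₁, e ∈ F := fun e he => chain'_iff_arcs.1 hl13 e (hr15 e he)
      have hr1h : r₁.head? = some u := hr11.trans hl11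
      have hr1l : r₁.getLast? = some v := hr12.trans hl12
      have hr1path : IsDipath A u v r₁ :=
        ⟨hr10, hr1h, hr1l, hr13, chain'_iff_arcs.2 (fun e he => hFA e (hr1F e he))⟩
      have hR1_le : (listArcs r₁ : Multiset (V × V)) ≤ F := by
        rw [Multiset.le_iff_subset (Multiset.coe_nodup.2 (arcs_nodup hr13))]
        intro a ha
        exact hr1F a (Multiset.mem_coe.1 ha)
      have hnetF2 : ∀ x, netd (F - (listArcs r₁ : Multiset (V × V))) x =
          (if u = x then 1 else 0) - (if v = x then 1 else 0) := by
        intro x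
        rw [netd_sub hR1_le, hnetF, netd_arcs' hr1h hr1l]
        ring
      obtain ⟨l₂, hl20, hl21, hl22, hl23⟩ :=
        exists_walk (F - (listArcs r₁ : Multiset (V × V))) v u
        (by
          intro x hx
          have hvx : ¬ (v = x) := fun h => hx h.symm
          rw [hnetF2, if_neg hvx]
          split_ifs <;> norm_num)
        (Or.inr (by rw [hnetF2, if_pos rfl, if_neg hvu]; norm_num))
      obtain ⟨r₂, hr20, hr21, hr22, hr23, _, hr25⟩ := exists_nodup hl20
      have hr2F2 : ∀ e ∈ listArcs r₂, e ∈ F - (listArcs r₁ : Multiset (V × V)) :=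
        fun e he => chain'_iff_arcs.1 hl23 e (hr25 e he)
      have hr2path : IsDipath A u v r₂ := by
        refine ⟨hr20, hr21.trans hl21, hr22.trans hl22, hr23, chain'_iff_arcs.2 ?_⟩
        intro e he
        exact hFA e (Multiset.mem_of_le tsub_le_self (hr2F2 e he))
      refine ⟨r₁, r₂, hr1path, hr2path, ?_⟩
      intro e he1 he2
      have h2 : e ∈ F - (listArcs r₁ : Multiset (V × V)) := hr2F2 e he2
      have hc1 : 1 ≤ (listArcs r₁ : Multiset (V × V)).count e :=
        Multiset.one_le_count_iff_mem.2 (Multiset.mem_coe.2 he1)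
      have hcF : F.count e ≤ 1 := Multiset.nodup_iff_count_le_one.1 hFnodup e
      have hpos : 0 < (F - (listArcs r₁ : Multiset (V × V))).count e :=
        Multiset.count_pos.2 h2
      rw [Multiset.count_sub] at hpos
      omega
  · -- two-reachability implies strong connectivity of the reversal
    intro htr x y
    obtain ⟨r₁, r₂, ⟨hr10, hr11, hr12, hr13, hr15⟩, ⟨hr20, hr21, hr22, hr23, hr25⟩,
      hdisj⟩ := htr
    have hback : ∀ a ∈ p, Reaches (reverseAlong A p) a u := by
      intro a ha
      obtain ⟨s, t, hst⟩ := List.append_of_mem ha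
      apply reaches_of_walk (l := (s ++ [a]).reverse)
      · simp
      · rw [List.head?_reverse, List.getLast?_append_of_ne_nil (l₁ := s) (by simp)]
        rfl
      · rw [List.getLast?_reverse]
        have hh : (s ++ [a]).head? = p.head? := by
          rw [hst]; cases s <;> simp
        rw [hh, hp1]
      · refine List.isChain_reverse.2 (chain'_iff_arcs.2 ?_)
        intro e he
        have hep : e ∈ listArcs p := by
          rw [hst, show s ++ a :: t = (s ++ [a]) ++ t by simp]
          exact arcs_append_left _ he
        exact mem_reverseAlong.2 (Or.inr (by simpa using hep))
    have hfwd : ∀ a ∈ p, Reaches (reverseAlong A p) v a := by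
      intro a ha
      obtain ⟨s, t, hst⟩ := List.append_of_mem ha
      apply reaches_of_walk (l := (a :: t).reverse)
      · simp
      · rw [List.head?_reverse,
          show (a :: t).getLast? = p.getLast? by
            rw [hst, List.getLast?_append_of_ne_nil (l₁ := s) (by simp)], hp2]
      · rw [List.getLast?_reverse]
        rfl
      · refine List.isChain_reverse.2 (chain'_iff_arcs.2 ?_)
        intro e he
        have hep : e ∈ listArcs p := by
          rw [hst]
          exact arcs_append_right _ he
        exact mem_reverseAlong.2 (Or.inr (by simpa using hep))
    have hstep1 : Reaches (reverseAlong A p) u v := by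
      by_cases huv : u = v
      · exact huv ▸ reaches_refl _ u
      · set Em : Multiset (V × V) := (listArcs p : Multiset (V × V)) with hEmdef
        set Rm : Multiset (V × V) :=
          (listArcs r₁ : Multiset (V × V)) + (listArcs r₂ : Multiset (V × V)) with hRmdef
        set C : Multiset (V × V) := Rm ∩ Em with hCdef
        set F' : Multiset (V × V) := (Rm - C) + (Em - C).map Prod.swap with hF'def
        have hnet : ∀ z, netd F' z = (if u = z then 1 else 0) - (if v = z then 1 else 0) := by
          intro z
          rw [hF'def, netd_add, netd_sub Multiset.inter_le_left, netd_swap,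
            netd_sub Multiset.inter_le_right, hRmdef, netd_add,
            netd_arcs' hr11 hr12, netd_arcs' hr21 hr22, netd_arcs' hp1 hp2]
          ring
        have hsupp : ∀ e ∈ F', e ∈ reverseAlong A p := by
          intro e he
          rcases Multiset.mem_add.1 he with h | h
          · have hcnt : 0 < (Rm - C).count e := Multiset.count_pos.2 h
            rw [Multiset.count_sub, hCdef, Multiset.count_inter] at hcnt
            have hr1c : (listArcs r₁ : Multiset (V × V)).count e ≤ 1 :=
              Multiset.nodup_iff_count_le_one.1 (Multiset.coe_nodup.2 (arcs_nodup hr13)) e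
            have hr2c : (listArcs r₂ : Multiset (V × V)).count e ≤ 1 :=
              Multiset.nodup_iff_count_le_one.1 (Multiset.coe_nodup.2 (arcs_nodup hr23)) e
            have hRmc : Rm.count e =
                (listArcs r₁ : Multiset (V × V)).count e +
                  (listArcs r₂ : Multiset (V × V)).count e := by
              rw [hRmdef, Multiset.count_add]
            have heRm : e ∈ Rm := by
              rw [← Multiset.count_pos]
              omega
            have heA : e ∈ A := by
              rcases Multiset.mem_add.1 (hRmdef ▸ heRm) with h' | h'
              · exact chain'_iff_arcs.1 hr15 e (Multiset.mem_coe.1 h')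
              · exact chain'_iff_arcs.1 hr25 e (Multiset.mem_coe.1 h')
            have henp : e ∉ listArcs p := by
              intro hep
              have hEmc : 1 ≤ Em.count e := by
                rw [hEmdef]
                exact Multiset.one_le_count_iff_mem.2 (Multiset.mem_coe.2 hep)
              have h1 : e ∈ listArcs r₁ := by
                rw [← Multiset.mem_coe, ← Multiset.one_le_count_iff_mem]
                omega
              have h2 : e ∈ listArcs r₂ := by
                rw [← Multiset.mem_coe, ← Multiset.one_le_count_iff_mem]
                omega
              exact hdisj e h1 h2
            exact mem_reverseAlong.2 (Or.inl ⟨heA, henp⟩)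
          · obtain ⟨f, hf, rfl⟩ := Multiset.mem_map.1 h
            have hfEm : f ∈ Em := Multiset.mem_of_le tsub_le_self hf
            rw [hEmdef, Multiset.mem_coe] at hfEm
            exact mem_reverseAlong.2 (Or.inr (by simpa using hfEm))
        have hvu : ¬ (v = u) := fun h => huv h.symm
        obtain ⟨l, hl0, hl1, hl2, hl3⟩ := exists_walk F' v u
          (by
            intro z hz
            have hvz : ¬ (v = z) := fun h => hz h.symm
            rw [hnet, if_neg hvz]
            split_ifs <;> norm_num)
          (Or.inr (by rw [hnet, if_pos rfl, if_neg hvu]; norm_num))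
        exact reaches_of_walk hl0 hl1 hl2
          (List.IsChain.imp (fun a b h => hsupp _ h) hl3)
    obtain ⟨p₀, h00, h01, h02, h03, h05⟩ := hsc x y
    apply reaches_lift h00 h01 h02 h05
    intro a b hab
    by_cases habp : (a, b) ∈ listArcs p
    · have ha := (mem_of_mem_arcs habp).1
      have hb := (mem_of_mem_arcs habp).2
      exact reaches_trans (hback a ha) (reaches_trans hstep1 (hfwd b hb))
    · exact reaches_of_mem (mem_reverseAlong.2 (Or.inl ⟨hab, habp⟩))
end

section
/- Let D be a strongly connected digraph, let u and v be vertices of D, and let P be a directed path from u to v in D such that the digraph obtained from D by reversing every arc of P is strongly connected. Then u two-reaches v in D. -/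
namespace StmtAux

variable {V : Type*} [DecidableEq V]

def outD (S : Finset (V × V)) (x : V) : ℕ := (S.filter (fun e => e.1 = x)).card

lemma listArcs_eq : ∀ (p : List V), listArcs p = p.dropLast.zip p.tail
  | [] => rfl
  | [_] => rfl
  | a :: b :: s => by
    have ih := listArcs_eq (b :: s)
    simp only [listArcs, List.zip_cons_cons, List.tail_cons] at ih ⊢
    rw [List.dropLast_cons₂, List.zip_cons_cons, ih]

lemma countP_zip_fst (x : V) : ∀ (l m : List V), l.length = m.length →
    (l.zip m).countP (fun e => e.1 = x) = l.count x
  | [], [] => by simp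
  | [], _ :: _ => by simp
  | _ :: _, [] => by simp
  | a :: l, b :: m => by
    intro h
    simp only [List.zip_cons_cons, List.countP_cons, List.count_cons]
    rw [countP_zip_fst x l m (by simpa using h)]
    by_cases hax : a = x <;> simp [hax]

lemma countP_zip_snd (x : V) : ∀ (l m : List V), l.length = m.length →
    (l.zip m).countP (fun e => e.2 = x) = m.count x
  | [], [] => by simp
  | [], _ :: _ => by simp
  | _ :: _, [] => by simp
  | a :: l, b :: m => by
    intro h
    simp only [List.zip_cons_cons, List.countP_cons, List.count_cons]
    rw [countP_zip_snd x l m (by simpa using h)]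
    by_cases hbx : b = x <;> simp [hbx]

lemma nodup_listArcs {p : List V} (h : p.Nodup) : (listArcs p).Nodup := by
  rw [listArcs_eq]
  refine List.Nodup.of_map Prod.snd ?_
  rw [List.map_snd_zip (by simp [List.length_dropLast, List.length_tail])]
  exact h.tail

lemma card_filter_toFinset {l : List (V × V)} (hl : l.Nodup) (pr : V × V → Bool) :
    (l.toFinset.filter (fun e => pr e)).card = l.countP pr := by
  have h1 : (l.filter pr).toFinset = l.toFinset.filter (fun e => pr e) := by
    ext e; simp
  rw [← h1, List.toFinset_card_of_nodup (hl.filter pr), List.countP_eq_length_filter]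

lemma lenEq (p : List V) : p.dropLast.length = p.tail.length := by
  simp [List.length_dropLast, List.length_tail]

lemma outD_arcs {p : List V} (hnd : p.Nodup) (x : V) :
    outD (listArcs p).toFinset x = p.dropLast.count x := by
  unfold outD
  have := card_filter_toFinset (nodup_listArcs hnd) (fun e => decide (e.1 = x))
  simp only [decide_eq_true_eq] at this
  rw [this, listArcs_eq, countP_zip_fst x _ _ (lenEq p)]

lemma inDeg_arcs {p : List V} (hnd : p.Nodup) (x : V) :
    inDeg (listArcs p).toFinset x = p.tail.count x := by
  unfold inDeg
  have := card_filter_toFinset (nodup_listArcs hnd) (fun e => decide (e.2 = x))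
  simp only [decide_eq_true_eq] at this
  rw [this, listArcs_eq, countP_zip_snd x _ _ (lenEq p)]

lemma path_balance {A : Finset (V × V)} {u v : V} {p : List V} (h : IsDipath A u v p) (x : V) :
    outD (listArcs p).toFinset x + (if x = v then 1 else 0)
      = inDeg (listArcs p).toFinset x + (if x = u then 1 else 0) := by
  obtain ⟨hne, hh, hl, hnd, _⟩ := h
  rw [outD_arcs hnd, inDeg_arcs hnd]
  have hv : p.getLast hne = v := by
    rw [List.getLast?_eq_getLast hne] at hl; exact Option.some_injective _ hl
  have hsplit : p.dropLast ++ [v] = p := by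
    rw [← hv]; exact List.dropLast_append_getLast hne
  have hu : p = u :: p.tail := by
    cases p with
    | nil => simp at hne
    | cons a t => simp at hh; simp [hh]
  have h1 : p.dropLast.count x + (if x = v then 1 else 0) = p.count x := by
    conv_rhs => rw [← hsplit]
    rw [List.count_append]
    by_cases hx : x = v
    · subst hx; simp
    · rw [if_neg hx]
      have : List.count x [v] = 0 := by
        rw [List.count_eq_zero]; simp [hx]
      omega
  have h2 : p.count x = p.tail.count x + (if x = u then 1 else 0) := by
    conv_lhs => rw [hu]
    rw [List.count_cons]
    by_cases hx : x = u
    · simp [hx]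
    · simp only [beq_iff_eq]
      rw [if_neg (fun h => hx h.symm), if_neg hx]
  omega

section DegArith

variable (pr : V × V → Prop) [DecidablePred pr]

lemma fcard_union {S T : Finset (V × V)} (h : Disjoint S T) :
    ((S ∪ T).filter pr).card = (S.filter pr).card + (T.filter pr).card := by
  rw [Finset.filter_union,
    Finset.card_union_of_disjoint (h.mono (Finset.filter_subset _ _) (Finset.filter_subset _ _))]

lemma fcard_sdiff {S T : Finset (V × V)} (h : T ⊆ S) :
    ((S \ T).filter pr).card + (T.filter pr).card = (S.filter pr).card := by
  have h1 : (S \ T).filter pr = S.filter pr \ T.filter pr := by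
    ext e; simp only [Finset.mem_filter, Finset.mem_sdiff]; tauto
  rw [h1, Finset.card_sdiff_add_card_eq_card (Finset.filter_subset_filter pr h)]

end DegArith

lemma outD_union {S T : Finset (V × V)} (h : Disjoint S T) (x : V) :
    outD (S ∪ T) x = outD S x + outD T x := fcard_union _ h

lemma inDeg_union {S T : Finset (V × V)} (h : Disjoint S T) (x : V) :
    inDeg (S ∪ T) x = inDeg S x + inDeg T x := fcard_union _ h

lemma outD_sdiff {S T : Finset (V × V)} (h : T ⊆ S) (x : V) :
    outD (S \ T) x + outD T x = outD S x := fcard_sdiff _ h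

lemma inDeg_sdiff {S T : Finset (V × V)} (h : T ⊆ S) (x : V) :
    inDeg (S \ T) x + inDeg T x = inDeg S x := fcard_sdiff _ h

lemma mem_image_swap {S : Finset (V × V)} {e : V × V} :
    e ∈ S.image Prod.swap ↔ e.swap ∈ S := by
  constructor
  · intro h
    obtain ⟨a, ha, rfl⟩ := Finset.mem_image.1 h
    simpa using ha
  · intro h
    exact Finset.mem_image.2 ⟨e.swap, h, by simp⟩

lemma outD_image_swap (S : Finset (V × V)) (x : V) :
    outD (S.image Prod.swap) x = inDeg S x := by
  unfold outD inDeg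
  have h1 : (S.image Prod.swap).filter (fun e => e.1 = x)
      = (S.filter (fun e => e.2 = x)).image Prod.swap := by
    ext e
    simp only [Finset.mem_filter, mem_image_swap]
    rfl
  rw [h1, Finset.card_image_of_injective _ Prod.swap_injective]

lemma inDeg_image_swap (S : Finset (V × V)) (x : V) :
    inDeg (S.image Prod.swap) x = outD S x := by
  unfold outD inDeg
  have h1 : (S.image Prod.swap).filter (fun e => e.2 = x)
      = (S.filter (fun e => e.1 = x)).image Prod.swap := by
    ext e
    simp only [Finset.mem_filter, mem_image_swap]
    rfl
  rw [h1, Finset.card_image_of_injective _ Prod.swap_injective]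

lemma outD_erase {F : Finset (V × V)} {e : V × V} (he : e ∈ F) (x : V) :
    outD (F.erase e) x + (if e.1 = x then 1 else 0) = outD F x := by
  rw [Finset.erase_eq]
  have := outD_sdiff (T := {e}) (Finset.singleton_subset_iff.2 he) x
  rw [← this]
  congr 1
  unfold outD
  rw [Finset.filter_singleton]
  by_cases h : e.1 = x <;> simp [h]

lemma inDeg_erase {F : Finset (V × V)} {e : V × V} (he : e ∈ F) (x : V) :
    inDeg (F.erase e) x + (if e.2 = x then 1 else 0) = inDeg F x := by
  rw [Finset.erase_eq]
  have := inDeg_sdiff (T := {e}) (Finset.singleton_subset_iff.2 he) x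
  rw [← this]
  congr 1
  unfold inDeg
  rw [Finset.filter_singleton]
  by_cases h : e.2 = x <;> simp [h]

lemma dipath_single (F : Finset (V × V)) (v : V) : IsDipath F v v [v] :=
  ⟨by simp, rfl, rfl, by simp, List.isChain_singleton v⟩

lemma dipath_mono {F G : Finset (V × V)} (h : F ⊆ G) {u v : V} {p : List V}
    (hp : IsDipath F u v p) : IsDipath G u v p :=
  ⟨hp.1, hp.2.1, hp.2.2.1, hp.2.2.2.1, hp.2.2.2.2.imp (fun _ _ hab => h hab)⟩

lemma arcs_mem {A : Finset (V × V)} : ∀ {p : List V},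
    p.Chain' (fun a b => (a, b) ∈ A) → ∀ e ∈ listArcs p, e ∈ A
  | [], _, e, he => by simp [listArcs] at he
  | [_], _, e, he => by simp [listArcs] at he
  | a :: b :: s, hc, e, he => by
    rw [List.Chain', List.isChain_cons_cons] at hc
    simp only [listArcs, List.tail_cons, List.zip_cons_cons, List.mem_cons] at he
    rcases he with rfl | he
    · exact hc.1
    · exact arcs_mem hc.2 e he

lemma reach_aux : ∀ (n : ℕ) (F : Finset (V × V)) (u v : V), F.card ≤ n →
    (∀ x, x ≠ v → inDeg F x ≤ outD F x) → (u = v ∨ inDeg F u < outD F u) →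
    ∃ p, IsDipath F u v p := by
  intro n
  induction n with
  | zero =>
    intro F u v hc _ hu
    have : F = ∅ := Finset.card_eq_zero.1 (Nat.le_zero.1 hc)
    subst this
    rcases hu with rfl | hu
    · exact ⟨[u], dipath_single _ u⟩
    · simp [outD] at hu
  | succ n ih =>
    intro F u v hc hbal hu
    rcases hu with rfl | hu
    · exact ⟨[u], dipath_single _ u⟩
    have hpos : 0 < outD F u := lt_of_le_of_lt (Nat.zero_le _) hu
    obtain ⟨⟨a, w⟩, he⟩ := Finset.card_pos.1 hpos
    rw [Finset.mem_filter] at he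
    obtain ⟨heF, heu⟩ := he
    dsimp only at heu
    subst heu
    have hcard : (F.erase (a, w)).card ≤ n := by
      have := Finset.card_erase_of_mem heF
      omega
    have hbal' : ∀ x, x ≠ v → inDeg (F.erase (a, w)) x ≤ outD (F.erase (a, w)) x := by
      intro x hx
      have h1 := outD_erase heF x
      have h2 := inDeg_erase heF x
      dsimp only at h1 h2
      have h3 := hbal x hx
      by_cases hxu : a = x
      · subst hxu
        rw [if_pos rfl] at h1
        by_cases hxw : w = a
        · rw [if_pos hxw] at h2; omega
        · rw [if_neg hxw] at h2; omega
      · rw [if_neg hxu] at h1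
        by_cases hxw : w = x
        · rw [if_pos hxw] at h2; omega
        · rw [if_neg hxw] at h2; omega
    have hw' : w = v ∨ inDeg (F.erase (a, w)) w < outD (F.erase (a, w)) w := by
      by_cases hwv : w = v
      · exact Or.inl hwv
      right
      have h1 := outD_erase heF w
      have h2 := inDeg_erase heF w
      dsimp only at h1 h2
      rw [if_pos rfl] at h2
      have h3 := hbal w hwv
      by_cases hxu : a = w
      · subst hxu
        rw [if_pos rfl] at h1
        omega
      · rw [if_neg hxu] at h1
        omega
    obtain ⟨q, hq⟩ := ih (F.erase (a, w)) w v hcard hbal' hw'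
    obtain ⟨qne, qh, ql, qnd, qc⟩ := hq
    have hFsub : F.erase (a, w) ⊆ F := Finset.erase_subset _ _
    by_cases huq : a ∈ q
    · set r := q.dropWhile (fun y => y ≠ a) with hr
      have hsuf : r <:+ q := List.dropWhile_suffix _
      have hrne : r ≠ [] := by
        intro h
        rw [hr, List.dropWhile_eq_nil_iff] at h
        have := h a huq
        simp at this
      have hrh : r.head? = some a := by
        rw [List.head?_eq_head hrne]
        congr 1
        have := List.head_dropWhile_not (fun y => y ≠ a) hrne
        exact not_ne_iff.mp (of_decide_eq_false this)
      have hrl : r.getLast? = some v := by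
        obtain ⟨s, hs⟩ := hsuf
        rw [← hs, List.getLast?_append] at ql
        cases h : r.getLast? with
        | none => rw [List.getLast?_eq_none_iff] at h; exact absurd h hrne
        | some b => rw [h] at ql; simpa using ql
      refine ⟨r, hrne, hrh, hrl, qnd.sublist hsuf.sublist, ?_⟩
      exact (qc.suffix hsuf).imp (fun x y hxy => hFsub hxy)
    · refine ⟨a :: q, by simp, by simp, ?_, by simp [qnd, huq], ?_⟩
      · rw [show a :: q = [a] ++ q from rfl, List.getLast?_append, ql]
        simp
      · rw [List.Chain', List.isChain_cons]
        refine ⟨?_, qc.imp (fun x y hxy => hFsub hxy)⟩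
        intro y hy
        rw [qh] at hy
        simp at hy
        subst hy
        exact heF
end StmtAux

/-- If reversing a directed path from `u` to `v` in a strongly connected digraph yields a
strongly connected digraph, then `u` two-reaches `v` in the original digraph. -/
theorem stmt_2 {V : Type*} [Fintype V] [DecidableEq V] (A : Finset (V × V))
    (hsc : StronglyConnected A) (u v : V) (p : List V) (hp : IsDipath A u v p)
    (hrev : StronglyConnected (reverseAlong A p)) :
    TwoReaches A u v := by
  classical
  by_cases huv : u = v
  · subst huv
    exact ⟨[u], [u], StmtAux.dipath_single A u, StmtAux.dipath_single A u,
      by simp [ArcDisjoint, listArcs]⟩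
  obtain ⟨q, hq⟩ := hrev u v
  set E1 := (listArcs p).toFinset with hE1
  set E2 := (listArcs q).toFinset with hE2
  have hE1A : E1 ⊆ A := fun e he => StmtAux.arcs_mem hp.2.2.2.2 e (List.mem_toFinset.1 he)
  have hrevEq : reverseAlong A p = (A \ E1) ∪ E1.image Prod.swap := by
    have himg : (List.map Prod.swap (listArcs p)).toFinset = E1.image Prod.swap := by
      ext e; simp [hE1]
    rw [reverseAlong, himg, ← hE1]
  have hE2sub : ∀ e ∈ E2, e ∈ (A \ E1) ∪ E1.image Prod.swap := fun e he => by
    rw [← hrevEq]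
    exact StmtAux.arcs_mem hq.2.2.2.2 e (List.mem_toFinset.1 he)
  set C := E1 ∩ E2.image Prod.swap with hC
  have hCsub : C ⊆ E1 := Finset.inter_subset_left
  have hswC : C.image Prod.swap = E2 ∩ E1.image Prod.swap := by
    ext e
    simp only [StmtAux.mem_image_swap, hC, Finset.mem_inter, Prod.swap_swap]
    tauto
  have hswCsub : C.image Prod.swap ⊆ E2 := by
    rw [hswC]; exact Finset.inter_subset_left
  set F := (E1 \ C) ∪ (E2 \ C.image Prod.swap) with hF
  have hdisjF : Disjoint (E1 \ C) (E2 \ C.image Prod.swap) := by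
    rw [Finset.disjoint_left]
    intro e he1 he2
    obtain ⟨heE1, _⟩ := Finset.mem_sdiff.1 he1
    obtain ⟨heE2, hnsw⟩ := Finset.mem_sdiff.1 he2
    rcases Finset.mem_union.1 (hE2sub e heE2) with h | h
    · exact (Finset.mem_sdiff.1 h).2 heE1
    · apply hnsw
      rw [StmtAux.mem_image_swap, hC, Finset.mem_inter]
      exact ⟨StmtAux.mem_image_swap.1 h, StmtAux.mem_image_swap.2 (by simpa using heE2)⟩
  have hFA : F ⊆ A := by
    intro e he
    rcases Finset.mem_union.1 he with h | h
    · exact hE1A (Finset.mem_sdiff.1 h).1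
    · obtain ⟨he2, hnsw⟩ := Finset.mem_sdiff.1 h
      rcases Finset.mem_union.1 (hE2sub e he2) with h' | h'
      · exact (Finset.mem_sdiff.1 h').1
      · exfalso
        apply hnsw
        rw [StmtAux.mem_image_swap, hC, Finset.mem_inter]
        exact ⟨StmtAux.mem_image_swap.1 h', StmtAux.mem_image_swap.2 (by simpa using he2)⟩
  have hFbal : ∀ x, StmtAux.outD F x + (if x = v then 2 else 0)
      = inDeg F x + (if x = u then 2 else 0) := by
    intro x
    have b1 := StmtAux.outD_union hdisjF x
    have b2 := StmtAux.outD_sdiff hCsub x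
    have b3 := StmtAux.outD_sdiff hswCsub x
    have b4 := StmtAux.inDeg_union hdisjF x
    have b5 := StmtAux.inDeg_sdiff hCsub x
    have b6 := StmtAux.inDeg_sdiff hswCsub x
    have b7 := StmtAux.outD_image_swap C x
    have b8 := StmtAux.inDeg_image_swap C x
    have pb1 := StmtAux.path_balance hp x
    have pb2 := StmtAux.path_balance hq x
    rw [← hE1] at pb1
    rw [← hE2] at pb2
    rw [← hF] at b1 b4
    split_ifs at pb1 pb2 ⊢ <;> omega
  have hbal1 : ∀ x, x ≠ v → inDeg F x ≤ StmtAux.outD F x := by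
    intro x hx
    have h := hFbal x
    rw [if_neg hx] at h
    by_cases hxu : x = u
    · rw [if_pos hxu] at h; omega
    · rw [if_neg hxu] at h; omega
  have hstart1 : inDeg F u < StmtAux.outD F u := by
    have h := hFbal u
    rw [if_neg huv, if_pos rfl] at h
    omega
  obtain ⟨p1, hp1⟩ := StmtAux.reach_aux F.card F u v le_rfl hbal1 (Or.inr hstart1)
  set S1 := (listArcs p1).toFinset with hS1
  have hS1F : S1 ⊆ F := fun e he => StmtAux.arcs_mem hp1.2.2.2.2 e (List.mem_toFinset.1 he)
  have hF'bal : ∀ x, StmtAux.outD (F \ S1) x + (if x = v then 1 else 0)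
      = inDeg (F \ S1) x + (if x = u then 1 else 0) := by
    intro x
    have c1 := StmtAux.outD_sdiff hS1F x
    have c2 := StmtAux.inDeg_sdiff hS1F x
    have c3 := StmtAux.path_balance hp1 x
    have h := hFbal x
    rw [← hS1] at c3
    split_ifs at c3 h ⊢ <;> omega
  have hbal2 : ∀ x, x ≠ v → inDeg (F \ S1) x ≤ StmtAux.outD (F \ S1) x := by
    intro x hx
    have h := hF'bal x
    rw [if_neg hx] at h
    by_cases hxu : x = u
    · rw [if_pos hxu] at h; omega
    · rw [if_neg hxu] at h; omega
  have hstart2 : inDeg (F \ S1) u < StmtAux.outD (F \ S1) u := by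
    have h := hF'bal u
    rw [if_neg huv, if_pos rfl] at h
    omega
  obtain ⟨p2, hp2⟩ := StmtAux.reach_aux (F \ S1).card (F \ S1) u v le_rfl hbal2 (Or.inr hstart2)
  refine ⟨p1, p2, StmtAux.dipath_mono hFA hp1,
    StmtAux.dipath_mono ((Finset.sdiff_subset).trans hFA) hp2, ?_⟩
  intro e he1 he2
  have h1 : e ∈ S1 := List.mem_toFinset.2 he1
  have h2 : e ∈ F \ S1 := StmtAux.arcs_mem hp2.2.2.2.2 e he2
  exact (Finset.mem_sdiff.1 h2).2 h1
end

section
/- Let D = (V, Λ) be a strongly connected digraph, let v ∈ V, let U be the set of vertices that two-reach v in D, and let C be a connected component of D[V∖U] (components taken in the underlying undirected graph). Then no vertex of C has directed paths in D[V∖U] to two distinct vertices of C each of which is the tail of an arc into U. Equivalently, the sets W_i of vertices of C that reach (within C) the i-th tail of an arc from C to U are pairwise disjoint. -/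
namespace Aux
variable {V : Type*}

@[simp] lemma listArcs_nil : listArcs ([] : List V) = [] := rfl
@[simp] lemma listArcs_single (a : V) : listArcs [a] = [] := rfl
@[simp] lemma listArcs_cons₂ (a b : V) (l : List V) :
    listArcs (a :: b :: l) = (a, b) :: listArcs (b :: l) := rfl

lemma chain'_cons_cons_iff {R : V → V → Prop} {a b : V} {l : List V} :
    List.Chain' R (a :: b :: l) ↔ R a b ∧ List.Chain' R (b :: l) := List.isChain_cons_cons
@[simp] lemma chain'_nil' {R : V → V → Prop} : List.Chain' R ([] : List V) := List.isChain_nil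
@[simp] lemma chain'_singleton' {R : V → V → Prop} (a : V) : List.Chain' R [a] :=
  List.isChain_singleton a
lemma chain'_append' {R : V → V → Prop} {l₁ l₂ : List V} :
    List.Chain' R (l₁ ++ l₂) ↔ List.Chain' R l₁ ∧ List.Chain' R l₂ ∧
      ∀ x ∈ l₁.getLast?, ∀ y ∈ l₂.head?, R x y := List.isChain_append

lemma listArcs_map_fst : ∀ p : List V, (listArcs p).map Prod.fst = p.dropLast
  | [] => rfl
  | [a] => rfl
  | a :: b :: l => by
    rw [listArcs_cons₂, List.map_cons, listArcs_map_fst (b :: l)]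
    rfl

lemma listArcs_map_snd : ∀ p : List V, (listArcs p).map Prod.snd = p.tail
  | [] => rfl
  | [a] => rfl
  | a :: b :: l => by
    rw [listArcs_cons₂, List.map_cons, listArcs_map_snd (b :: l)]
    rfl

lemma snd_mem_tail {p : List V} {e : V × V} (h : e ∈ listArcs p) : e.2 ∈ p.tail := by
  rw [← listArcs_map_snd]; exact List.mem_map_of_mem h

lemma fst_mem_dropLast {p : List V} {e : V × V} (h : e ∈ listArcs p) : e.1 ∈ p.dropLast := by
  rw [← listArcs_map_fst]; exact List.mem_map_of_mem h

lemma chain'_iff_listArcs (R : V → V → Prop) :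
    ∀ p : List V, p.Chain' R ↔ ∀ e ∈ listArcs p, R e.1 e.2
  | [] => by simp
  | [a] => by simp
  | a :: b :: l => by
    rw [chain'_cons_cons_iff, listArcs_cons₂, chain'_iff_listArcs R (b :: l)]
    simp_all

lemma listArcs_nodup {p : List V} (h : p.Nodup) : (listArcs p).Nodup := by
  have h1 : (p.dropLast).Nodup := h.sublist (List.dropLast_sublist p)
  rw [← listArcs_map_fst] at h1
  exact h1.of_map _

lemma mem_listArcs_append_left : ∀ (m : List V) (n : List V), ∀ e ∈ listArcs m, e ∈ listArcs (m ++ n)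
  | [], _ => by simp
  | [a], _ => by simp
  | a :: b :: m, n => by
    intro e he
    rw [listArcs_cons₂] at he
    have : ((a :: b :: m) ++ n) = a :: b :: (m ++ n) := rfl
    rw [this, listArcs_cons₂]
    rcases List.mem_cons.1 he with h | h
    · exact List.mem_cons.2 (Or.inl h)
    · exact List.mem_cons.2 (Or.inr (mem_listArcs_append_left (b :: m) n e h))

lemma mem_listArcs_append_right : ∀ (m : List V) (n : List V), ∀ e ∈ listArcs n, e ∈ listArcs (m ++ n)
  | [], n => by simp
  | a :: m, n => by
    intro e he
    have h1 : e ∈ listArcs (m ++ n) := mem_listArcs_append_right m n e he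
    cases hmn : m ++ n with
    | nil => rw [hmn] at h1; simp at h1
    | cons c l =>
      have : (a :: m) ++ n = a :: c :: l := by rw [List.cons_append, hmn]
      rw [this, listArcs_cons₂]
      rw [hmn] at h1
      exact List.mem_cons.2 (Or.inr h1)

lemma mem_listArcs_mid : ∀ (m : List V) (a : V) (n : List V), ∀ e ∈ listArcs (m ++ a :: n),
    e ∈ listArcs (m ++ [a]) ∨ e ∈ listArcs (a :: n)
  | [], a, n => by simp
  | [x], a, n => by
    intro e he
    rw [List.singleton_append, listArcs_cons₂] at he
    rcases List.mem_cons.1 he with h | h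
    · left; simp [h]
    · right; exact h
  | x :: y :: m, a, n => by
    intro e he
    have h1 : (x :: y :: m) ++ a :: n = x :: y :: (m ++ a :: n) := rfl
    rw [h1, listArcs_cons₂] at he
    have h2 : (x :: y :: m) ++ [a] = x :: y :: (m ++ [a]) := rfl
    rw [h2, listArcs_cons₂]
    rcases List.mem_cons.1 he with h | h
    · left; exact List.mem_cons.2 (Or.inl h)
    · rcases mem_listArcs_mid (y :: m) a n e h with h' | h'
      · left; exact List.mem_cons.2 (Or.inr h')
      · right; exact h'



lemma getLast?_suffix {l₁ l₂ : List V} (h : l₂ ≠ []) :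
    (l₁ ++ l₂).getLast? = l₂.getLast? := by
  rw [List.getLast?_append, Option.or_of_isSome]
  simp [List.getLast?_isSome, h]

lemma head?_prefix {l₁ l₂ : List V} (h : l₁ ≠ []) :
    (l₁ ++ l₂).head? = l₁.head? := by
  rw [List.head?_append, Option.or_of_isSome]
  simp [List.isSome_head?, h]

lemma sublist_pair (a : V) : ∀ l : List V, List.Sublist [a, a] l →
    ∃ l1 l2 l3, l = l1 ++ a :: l2 ++ a :: l3 := by
  intro l h
  induction l with
  | nil => cases h
  | cons b l ih =>
    cases h with
    | cons _ h' =>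
      obtain ⟨l1, l2, l3, rfl⟩ := ih h'
      exact ⟨b :: l1, l2, l3, rfl⟩
    | cons_cons _ h' =>
      have ha : a ∈ l := List.singleton_sublist.1 h'
      obtain ⟨s, t, rfl⟩ := List.append_of_mem ha
      exact ⟨[], s, t, rfl⟩


lemma walk_to_path_aux (R : V → V → Prop) : ∀ (n : ℕ) (p : List V) (u v : V), p.length ≤ n →
    p ≠ [] → p.head? = some u → p.getLast? = some v → p.Chain' R →
    ∃ q : List V, q ≠ [] ∧ q.head? = some u ∧ q.getLast? = some v ∧ q.Nodup ∧ q.Chain' R ∧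
      (∀ e ∈ listArcs q, e ∈ listArcs p) ∧ (∀ w ∈ q, w ∈ p) := by
  intro n
  induction n with
  | zero => intro p u v hn h0; simp [List.length_eq_zero_iff.1 (Nat.le_zero.1 hn)] at h0
  | succ n ih =>
    intro p u v hn h0 h1 h2 hc
    by_cases hnd : p.Nodup
    · exact ⟨p, h0, h1, h2, hnd, hc, fun e he => he, fun w hw => hw⟩
    · obtain ⟨a, ha⟩ := List.exists_duplicate_iff_not_nodup.2 hnd
      obtain ⟨l1, l2, l3, rfl⟩ := sublist_pair a _ (List.duplicate_iff_sublist.1 ha)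
      have hq0 : (l1 ++ a :: l3 : List V) ≠ [] := by simp
      have hdecomp1 : l1 ++ a :: l2 ++ a :: l3 = (l1 ++ [a]) ++ (l2 ++ a :: l3) := by simp
      have hdecomp2 : l1 ++ a :: l2 ++ a :: l3 = (l1 ++ a :: l2) ++ (a :: l3) := by simp
      -- head
      have hq1 : (l1 ++ a :: l3).head? = some u := by
        cases l1 with
        | nil => simpa using h1
        | cons x l1' => simpa using h1
      -- last
      have hq2 : (l1 ++ a :: l3).getLast? = some v := by
        rw [getLast?_suffix (by simp : (a :: l3 : List V) ≠ [])]
        rw [hdecomp2, getLast?_suffix (by simp : (a :: l3 : List V) ≠ [])] at h2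
        exact h2
      -- arcs subset
      have harcs : ∀ e ∈ listArcs (l1 ++ a :: l3), e ∈ listArcs (l1 ++ a :: l2 ++ a :: l3) := by
        intro e he
        rcases mem_listArcs_mid l1 a l3 e he with h | h
        · rw [hdecomp1]; exact mem_listArcs_append_left _ _ e h
        · rw [hdecomp2]; exact mem_listArcs_append_right _ _ e h
      -- chain
      have hqc : (l1 ++ a :: l3).Chain' R := by
        rw [chain'_iff_listArcs]
        intro e he
        exact (chain'_iff_listArcs R _).1 hc e (harcs e he)
      -- length
      have hlen : (l1 ++ a :: l3).length ≤ n := by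
        simp [List.length_append] at hn ⊢
        omega
      obtain ⟨q, hq0', hq1', hq2', hqnd, hqc', hqa, hqm⟩ :=
        ih (l1 ++ a :: l3) u v hlen hq0 hq1 hq2 hqc
      refine ⟨q, hq0', hq1', hq2', hqnd, hqc', fun e he => harcs e (hqa e he), fun w hw => ?_⟩
      have := hqm w hw
      simp at this ⊢
      tauto

lemma walk_to_path {R : V → V → Prop} {p : List V} {u v : V}
    (h0 : p ≠ []) (h1 : p.head? = some u) (h2 : p.getLast? = some v) (hc : p.Chain' R) :
    ∃ q : List V, q ≠ [] ∧ q.head? = some u ∧ q.getLast? = some v ∧ q.Nodup ∧ q.Chain' R ∧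
      (∀ e ∈ listArcs q, e ∈ listArcs p) ∧ (∀ w ∈ q, w ∈ p) :=
  walk_to_path_aux R p.length p u v le_rfl h0 h1 h2 hc

lemma rtg_to_walk {R : V → V → Prop} {u v : V} (h : Relation.ReflTransGen R u v) :
    ∃ p : List V, p ≠ [] ∧ p.head? = some u ∧ p.getLast? = some v ∧ p.Chain' R := by
  induction h with
  | refl => exact ⟨[u], by simp, rfl, rfl, by simp⟩
  | tail hab hbc ih =>
    rename_i b c
    obtain ⟨p, h0, h1, h2, hc⟩ := ih
    refine ⟨p ++ [c], by simp, by rwa [head?_prefix h0], by simp, ?_⟩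
    rw [chain'_append']
    refine ⟨hc, by simp, fun x hx y hy => ?_⟩
    simp at hy
    rw [h2] at hx
    simp at hx
    rw [← hx, ← hy]
    exact hbc

lemma chain'_to_rtg {R : V → V → Prop} : ∀ (p : List V) (u v : V),
    p.head? = some u → p.getLast? = some v → p.Chain' R → Relation.ReflTransGen R u v
  | [], u, v => by simp
  | [a], u, v => by
    intro h1 h2 _
    simp at h1 h2
    rw [← h1, ← h2]
  | a :: b :: l, u, v => by
    intro h1 h2 hc
    simp at h1
    rw [chain'_cons_cons_iff] at hc
    have := chain'_to_rtg (b :: l) b v rfl (by simpa using h2) hc.2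
    exact Relation.ReflTransGen.head (h1 ▸ hc.1) this

lemma rtg_to_path {R : V → V → Prop} {u v : V} (h : Relation.ReflTransGen R u v) :
    ∃ q : List V, q ≠ [] ∧ q.head? = some u ∧ q.getLast? = some v ∧ q.Nodup ∧ q.Chain' R := by
  obtain ⟨p, h0, h1, h2, hc⟩ := rtg_to_walk h
  obtain ⟨q, a, b, c, d, e, _, _⟩ := walk_to_path h0 h1 h2 hc
  exact ⟨q, a, b, c, d, e⟩

section Bal
variable [DecidableEq V]

def bal (F : Finset (V × V)) (w : V) : ℤ :=
  ((F.filter (fun e => e.1 = w)).card : ℤ) - ((F.filter (fun e => e.2 = w)).card : ℤ)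

lemma bal_union {s t : Finset (V × V)} (h : Disjoint s t) (w : V) :
    bal (s ∪ t) w = bal s w + bal t w := by
  unfold bal
  rw [Finset.filter_union, Finset.filter_union,
    Finset.card_union_of_disjoint (h.mono (Finset.filter_subset _ _) (Finset.filter_subset _ _)),
    Finset.card_union_of_disjoint (h.mono (Finset.filter_subset _ _) (Finset.filter_subset _ _))]
  push_cast
  ring

lemma bal_sdiff {s t : Finset (V × V)} (h : s ⊆ t) (w : V) :
    bal (t \ s) w = bal t w - bal s w := by
  unfold bal
  have h1 : (t \ s).filter (fun e => e.1 = w) = t.filter (fun e => e.1 = w) \ s.filter (fun e => e.1 = w) := by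
    ext e; simp [Finset.mem_sdiff]; tauto
  have h2 : (t \ s).filter (fun e => e.2 = w) = t.filter (fun e => e.2 = w) \ s.filter (fun e => e.2 = w) := by
    ext e; simp [Finset.mem_sdiff]; tauto
  rw [h1, h2, Finset.card_sdiff_of_subset (Finset.filter_subset_filter _ h),
    Finset.card_sdiff_of_subset (Finset.filter_subset_filter _ h)]
  have c1 := Finset.card_le_card (Finset.filter_subset_filter (fun e => e.1 = w) h)
  have c2 := Finset.card_le_card (Finset.filter_subset_filter (fun e => e.2 = w) h)
  push_cast [Nat.cast_sub c1, Nat.cast_sub c2]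
  ring

lemma mem_image_swap {s : Finset (V × V)} {e : V × V} :
    e ∈ s.image Prod.swap ↔ e.swap ∈ s := by
  constructor
  · rintro h
    obtain ⟨f, hf, rfl⟩ := Finset.mem_image.1 h
    simpa using hf
  · intro h
    exact Finset.mem_image.2 ⟨e.swap, h, by simp⟩

lemma bal_swap (s : Finset (V × V)) (w : V) :
    bal (s.image Prod.swap) w = - bal s w := by
  unfold bal
  have h1 : (s.image Prod.swap).filter (fun e => e.1 = w)
      = (s.filter (fun e => e.2 = w)).image Prod.swap := by
    ext ⟨a, b⟩
    simp only [Finset.mem_filter, mem_image_swap, Prod.swap_prod_mk]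
  have h2 : (s.image Prod.swap).filter (fun e => e.2 = w)
      = (s.filter (fun e => e.1 = w)).image Prod.swap := by
    ext ⟨a, b⟩
    simp only [Finset.mem_filter, mem_image_swap, Prod.swap_prod_mk]
  rw [h1, h2, Finset.card_image_of_injective _ Prod.swap_injective,
    Finset.card_image_of_injective _ Prod.swap_injective]
  ring

lemma card_filter_fst {l : List (V × V)} (hnd : l.Nodup) (hf : (l.map Prod.fst).Nodup) (w : V) :
    (l.toFinset.filter (fun e => e.1 = w)).card = if w ∈ l.map Prod.fst then 1 else 0 := by
  have hinj : Set.InjOn Prod.fst ((l.toFinset.filter (fun e => e.1 = w) : Finset (V × V)) : Set (V × V)) := by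
    intro a ha b hb hab
    simp only [Finset.coe_filter, Set.mem_setOf_eq, Finset.mem_coe, List.mem_toFinset] at ha hb
    exact List.inj_on_of_nodup_map hf ha.1 hb.1 hab
  rw [← Finset.card_image_of_injOn hinj]
  have himg : (l.toFinset.filter (fun e => e.1 = w)).image Prod.fst
      = (l.map Prod.fst).toFinset.filter (fun y => y = w) := by
    ext y
    simp only [Finset.mem_image, Finset.mem_filter, List.mem_toFinset, List.mem_map]
    constructor
    · rintro ⟨e, ⟨he, hew⟩, rfl⟩; exact ⟨⟨e, he, rfl⟩, hew⟩
    · rintro ⟨⟨e, he, rfl⟩, hew⟩; exact ⟨e, ⟨he, hew⟩, rfl⟩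
  rw [himg, Finset.filter_eq']
  split <;> simp_all

lemma card_filter_snd {l : List (V × V)} (hnd : l.Nodup) (hf : (l.map Prod.fst).Nodup) (hs : (l.map Prod.snd).Nodup) (w : V) :
    (l.toFinset.filter (fun e => e.2 = w)).card = if w ∈ l.map Prod.snd then 1 else 0 := by
  have hinj : Set.InjOn Prod.snd ((l.toFinset.filter (fun e => e.2 = w) : Finset (V × V)) : Set (V × V)) := by
    intro a ha b hb hab
    simp only [Finset.coe_filter, Set.mem_setOf_eq, Finset.mem_coe, List.mem_toFinset] at ha hb
    exact List.inj_on_of_nodup_map hs ha.1 hb.1 hab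
  rw [← Finset.card_image_of_injOn hinj]
  have himg : (l.toFinset.filter (fun e => e.2 = w)).image Prod.snd
      = (l.map Prod.snd).toFinset.filter (fun y => y = w) := by
    ext y
    simp only [Finset.mem_image, Finset.mem_filter, List.mem_toFinset, List.mem_map]
    constructor
    · rintro ⟨e, ⟨he, hew⟩, rfl⟩; exact ⟨⟨e, he, rfl⟩, hew⟩
    · rintro ⟨⟨e, he, rfl⟩, hew⟩; exact ⟨e, ⟨he, hew⟩, rfl⟩
  rw [himg, Finset.filter_eq']
  split <;> simp_all

lemma bal_path {p : List V} {u v : V} (h0 : p ≠ []) (h1 : p.head? = some u)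
    (h2 : p.getLast? = some v) (hnd : p.Nodup) (huv : u ≠ v) (w : V) :
    bal (listArcs p).toFinset w = (if w = u then 1 else 0) - (if w = v then 1 else 0) := by
  have hand : (listArcs p).Nodup := listArcs_nodup hnd
  have hdl : ((listArcs p).map Prod.fst).Nodup := by
    rw [listArcs_map_fst]; exact hnd.sublist (List.dropLast_sublist p)
  have htl : ((listArcs p).map Prod.snd).Nodup := by
    rw [listArcs_map_snd]; exact hnd.sublist (List.tail_sublist p)
  unfold bal
  rw [card_filter_fst hand hdl, card_filter_snd hand hdl htl, listArcs_map_fst, listArcs_map_snd]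
  -- p = u :: p.tail and p = p.dropLast ++ [v]
  have hcons : p = u :: p.tail := by
    cases p with
    | nil => simp at h0
    | cons a l => simp at h1; rw [List.tail_cons, h1]
  have hlast : p = p.dropLast ++ [v] := by
    conv_lhs => rw [← List.dropLast_append_getLast h0]
    congr 1
    have := List.getLast?_eq_getLast h0
    rw [h2] at this
    rw [(Option.some_inj.1 this).symm]
  have hu_not_tail : u ∉ p.tail := by
    intro hu
    have := hnd
    rw [hcons] at this
    exact (List.nodup_cons.1 this).1 hu
  have hv_not_dl : v ∉ p.dropLast := by
    intro hv
    have := hnd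
    rw [hlast] at this
    have := List.disjoint_of_nodup_append this
    exact this hv (by simp)
  have hmem_dl : ∀ y, y ∈ p.dropLast ↔ y ∈ p ∧ y ≠ v := by
    intro y
    constructor
    · intro hy
      refine ⟨(List.dropLast_sublist p).mem hy, fun hyv => hv_not_dl (hyv ▸ hy)⟩
    · rintro ⟨hy, hyv⟩
      conv at hy => rw [hlast]
      rcases List.mem_append.1 hy with h | h
      · exact h
      · simp at h; exact absurd h hyv
  have hmem_tl : ∀ y, y ∈ p.tail ↔ y ∈ p ∧ y ≠ u := by
    intro y
    constructor
    · intro hy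
      refine ⟨(List.tail_sublist p).mem hy, fun hyu => hu_not_tail (hyu ▸ hy)⟩
    · rintro ⟨hy, hyu⟩
      conv at hy => rw [hcons]
      rcases List.mem_cons.1 hy with h | h
      · exact absurd h hyu
      · exact h
  have hup : u ∈ p := by rw [hcons]; simp
  have hvp : v ∈ p := by rw [hlast]; simp
  by_cases hwu : w = u
  · subst hwu
    simp [hmem_dl, hmem_tl, hup, huv, hu_not_tail]
  · by_cases hwv : w = v
    · subst hwv
      simp [hmem_dl, hmem_tl, hvp, hwu]
    · by_cases hwp : w ∈ p
      · simp [hmem_dl, hmem_tl, hwp, hwu, hwv]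
      · simp [hmem_dl, hmem_tl, hwp, hwu, hwv]

lemma reach_of_bal (F : Finset (V × V)) (z v : V) [Fintype V]
    (hbal : ∀ w, w ≠ z → w ≠ v → bal F w = 0) (hz : 1 ≤ bal F z) :
    Relation.ReflTransGen (fun a b => (a, b) ∈ F) z v := by
  classical
  by_contra hnv
  set S : Finset V := Finset.univ.filter
    (fun w => Relation.ReflTransGen (fun a b => (a, b) ∈ F) z w) with hS
  have hzS : z ∈ S := by simp [hS]; exact Relation.ReflTransGen.refl
  have hvS : v ∉ S := by simp [hS]; exact hnv
  have hclose : ∀ e ∈ F, e.1 ∈ S → e.2 ∈ S := by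
    intro e he h1
    simp only [hS, Finset.mem_filter, Finset.mem_univ, true_and] at h1 ⊢
    exact h1.tail he
  have hsum : ∑ w ∈ S, bal F w = bal F z := by
    apply Finset.sum_eq_single_of_mem z hzS
    intro w hw hwz
    exact hbal w hwz (fun h => hvS (h ▸ hw))
  have hsum2 : ∑ w ∈ S, bal F w =
      ((F.filter (fun e => e.1 ∈ S)).card : ℤ) - ((F.filter (fun e => e.2 ∈ S)).card : ℤ) := by
    unfold bal
    rw [Finset.sum_sub_distrib]
    congr 1
    · rw [← Nat.cast_sum]
      congr 1
      rw [Finset.card_eq_sum_card_fiberwise (f := Prod.fst) (s := F.filter (fun e => e.1 ∈ S)) (t := S)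
        (fun e he => (Finset.mem_filter.1 he).2)]
      apply Finset.sum_congr rfl
      intro a ha
      congr 1
      ext e
      simp only [Finset.mem_filter, and_assoc]
      constructor
      · rintro ⟨he, h2⟩; exact ⟨he, by rw [h2]; exact ha, h2⟩
      · rintro ⟨he, _, h2⟩; exact ⟨he, h2⟩
    · rw [← Nat.cast_sum]
      congr 1
      rw [Finset.card_eq_sum_card_fiberwise (f := Prod.snd) (s := F.filter (fun e => e.2 ∈ S)) (t := S)
        (fun e he => (Finset.mem_filter.1 he).2)]
      apply Finset.sum_congr rfl
      intro a ha
      congr 1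
      ext e
      simp only [Finset.mem_filter, and_assoc]
      constructor
      · rintro ⟨he, h2⟩; exact ⟨he, by rw [h2]; exact ha, h2⟩
      · rintro ⟨he, _, h2⟩; exact ⟨he, h2⟩
  have hsub : F.filter (fun e => e.1 ∈ S) ⊆ F.filter (fun e => e.2 ∈ S) := by
    intro e he
    rw [Finset.mem_filter] at he ⊢
    exact ⟨he.1, hclose e he.1 he.2⟩
  have hle : ∑ w ∈ S, bal F w ≤ 0 := by
    rw [hsum2]
    have := Finset.card_le_card hsub
    omega
  rw [hsum] at hle
  omega

lemma chain_out (S : Set V) : ∀ (p : List V), p.Chain' (fun x y => x ∉ S → y ∉ S) →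
    ∀ h, p.head? = some h → h ∉ S → ∀ w ∈ p, w ∉ S
  | [] => by simp
  | [a] => by
    intro _ h hh hha w hw
    simp at hh hw
    rwa [hw, hh]
  | a :: b :: l => by
    intro hc h hh hha w hw
    rw [chain'_cons_cons_iff] at hc
    simp only [List.head?_cons, Option.some_inj] at hh
    subst hh
    rcases List.mem_cons.1 hw with rfl | hw'
    · exact hha
    · exact chain_out S (b :: l) hc.2 b rfl (hc.1 hha) w hw'

lemma crossing_unique (S : Set V) : ∀ (p : List V), p.Chain' (fun x y => x ∉ S → y ∉ S) →
    ∀ e₁ ∈ listArcs p, ∀ e₂ ∈ listArcs p,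
      e₁.1 ∈ S → e₁.2 ∉ S → e₂.1 ∈ S → e₂.2 ∉ S → e₁ = e₂
  | [] => by simp
  | [a] => by simp
  | a :: b :: l => by
    intro hc e₁ he₁ e₂ he₂ h11 h12 h21 h22
    rw [chain'_cons_cons_iff] at hc
    rw [listArcs_cons₂] at he₁ he₂
    have key : ∀ e ∈ listArcs (b :: l), e.1 ∈ S → e.2 ∉ S → b ∈ S := by
      intro e he hf _
      by_contra hb
      exact chain_out S (b :: l) hc.2 b rfl hb e.1
        ((List.dropLast_sublist (b :: l)).mem (fst_mem_dropLast he)) hf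
    rcases List.mem_cons.1 he₁ with rfl | h1'
    · rcases List.mem_cons.1 he₂ with rfl | h2'
      · rfl
      · exact absurd (key e₂ h2' h21 h22) h12
    · rcases List.mem_cons.1 he₂ with rfl | h2'
      · exact absurd (key e₁ h1' h11 h12) h22
      · exact crossing_unique S (b :: l) hc.2 e₁ h1' e₂ h2' h11 h12 h21 h22

lemma exists_crossing (S : Set V) : ∀ (p : List V) (u v : V), p.head? = some u →
    p.getLast? = some v → u ∈ S → v ∉ S → ∃ e ∈ listArcs p, e.1 ∈ S ∧ e.2 ∉ S
  | [] => by simp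
  | [a] => by
    intro u v h1 h2 hu hv
    simp at h1 h2
    rw [← h1, h2] at hu
    exact absurd hu hv
  | a :: b :: l => by
    intro u v h1 h2 hu hv
    simp only [List.head?_cons, Option.some_inj] at h1
    subst h1
    by_cases hb : b ∈ S
    · obtain ⟨e, he, h⟩ := exists_crossing S (b :: l) b v rfl (by simpa using h2) hb hv
      exact ⟨e, List.mem_cons.2 (Or.inr he), h⟩
    · exact ⟨(a, b), List.mem_cons.2 (Or.inl rfl), hu, hb⟩

lemma rtg_crossing {R : V → V → Prop} (S : Set V) {u v : V} (h : Relation.ReflTransGen R u v)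
    (hu : u ∈ S) (hv : v ∉ S) : ∃ a b, R a b ∧ a ∈ S ∧ b ∉ S := by
  revert hv
  induction h with
  | refl => intro hv; exact absurd hu hv
  | tail hab hbc ih =>
    rename_i b c
    intro hv
    by_cases hb : b ∈ S
    · exact ⟨b, c, hbc, hb, hv⟩
    · exact ih hb

end Bal

section Menger
variable [DecidableEq V] [Fintype V]

lemma dipath_rtg {A : Finset (V × V)} {u v : V} {p : List V} (h : IsDipath A u v p) :
    Relation.ReflTransGen (fun a b => (a, b) ∈ A) u v :=
  chain'_to_rtg p u v h.2.1 h.2.2.1 h.2.2.2.2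

lemma arcs_mem_of_dipath {A : Finset (V × V)} {u v : V} {p : List V} (h : IsDipath A u v p) :
    ∀ e ∈ listArcs p, e ∈ A := by
  intro e he
  have := (chain'_iff_listArcs _ p).1 h.2.2.2.2 e he
  simpa using this

lemma dipath_rtg_erase {A : Finset (V × V)} {e : V × V} {u v : V} {p : List V}
    (h : IsDipath A u v p) (he : e ∉ listArcs p) :
    Relation.ReflTransGen (fun a b => (a, b) ∈ A.erase e) u v := by
  apply chain'_to_rtg p u v h.2.1 h.2.2.1
  rw [chain'_iff_listArcs]
  intro f hf
  refine Finset.mem_erase.2 ⟨fun h' => he ?_, by simpa using arcs_mem_of_dipath h f hf⟩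
  rw [← h']
  simpa using hf

lemma tworeaches_erase {A : Finset (V × V)} {y v : V} (h : TwoReaches A y v) (e : V × V) :
    Relation.ReflTransGen (fun a b => (a, b) ∈ A.erase e) y v := by
  obtain ⟨p, q, hp, hq, hd⟩ := h
  by_cases hep : e ∈ listArcs p
  · exact dipath_rtg_erase hq (hd e hep)
  · exact dipath_rtg_erase hp hep

lemma mem_reverseAlong {A : Finset (V × V)} {p : List V} {e : V × V} :
    e ∈ reverseAlong A p ↔ (e ∈ A ∧ e ∉ (listArcs p).toFinset) ∨ e.swap ∈ (listArcs p).toFinset := by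
  unfold reverseAlong
  have : ((listArcs p).map Prod.swap).toFinset = (listArcs p).toFinset.image Prod.swap := by
    ext f; simp [List.mem_toFinset, Finset.mem_image]
  rw [Finset.mem_union, Finset.mem_sdiff, this, mem_image_swap]

lemma menger2 (A : Finset (V × V)) (z v : V)
    (hzv : Relation.ReflTransGen (fun a b => (a, b) ∈ A) z v)
    (hcut : ∀ e ∈ A, Relation.ReflTransGen (fun a b => (a, b) ∈ A.erase e) z v) :
    TwoReaches A z v := by
  by_cases hne : z = v
  · subst hne
    exact ⟨[z], [z], ⟨by simp, rfl, rfl, by simp, by simp⟩, ⟨by simp, rfl, rfl, by simp, by simp⟩,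
      by intro e he; simp [listArcs] at he⟩
  obtain ⟨P, hP0, hP1, hP2, hPnd, hPc⟩ := rtg_to_path hzv
  set EP : Finset (V × V) := (listArcs P).toFinset with hEP
  set A' : Finset (V × V) := reverseAlong A P with hA'
  have hPA : ∀ e ∈ listArcs P, e ∈ A := fun e he => by
    simpa using (chain'_iff_listArcs _ P).1 hPc e he
  -- Step 1 : z reaches v in A'
  have step1 : Relation.ReflTransGen (fun a b => (a, b) ∈ A') z v := by
    by_contra hnv
    set S : Set V := {w | Relation.ReflTransGen (fun a b => (a, b) ∈ A') z w} with hS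
    have hzS : z ∈ S := Relation.ReflTransGen.refl
    have hvS : v ∉ S := hnv
    have hclose : ∀ a b : V, (a, b) ∈ A' → a ∈ S → b ∈ S := fun a b hab ha => ha.tail hab
    have hchainP : P.Chain' (fun x y => x ∉ S → y ∉ S) := by
      rw [chain'_iff_listArcs]
      intro e he hx hy
      have hrev : e.swap ∈ A' := by
        rw [hA', mem_reverseAlong]
        right
        simp [List.mem_toFinset, he]
      exact hx (hclose e.2 e.1 hrev hy)
    obtain ⟨e₀, he₀, he₀1, he₀2⟩ := exists_crossing S P z v hP1 hP2 hzS hvS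
    obtain ⟨a, b, hab, haS, hbS⟩ := rtg_crossing S (hcut e₀ (hPA e₀ he₀)) hzS hvS
    have habA : (a, b) ∈ A := (Finset.mem_erase.1 hab).2
    have habne : (a, b) ≠ e₀ := (Finset.mem_erase.1 hab).1
    have habA' : (a, b) ∉ A' := fun h => hbS (hclose a b h haS)
    have habP : (a, b) ∈ listArcs P := by
      by_contra hnp
      exact habA' (by rw [hA', mem_reverseAlong]; left; simp [List.mem_toFinset, habA, hnp])
    exact habne (crossing_unique S P hchainP (a, b) habP e₀ he₀ haS hbS he₀1 he₀2)
  -- Step 2 : extract two arc-disjoint paths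
  obtain ⟨Q, hQ0, hQ1, hQ2, hQnd, hQc⟩ := rtg_to_path step1
  set EQ : Finset (V × V) := (listArcs Q).toFinset with hEQ
  have hQA' : ∀ e ∈ EQ, e ∈ A' := by
    intro e he
    rw [hEQ, List.mem_toFinset] at he
    simpa using (chain'_iff_listArcs _ Q).1 hQc e he
  set Cp : Finset (V × V) := EP ∩ EQ.image Prod.swap with hCp
  set F : Finset (V × V) := (EP \ Cp) ∪ (EQ \ EP.image Prod.swap) with hF
  have hFA : F ⊆ A := by
    intro e he
    rw [hF, Finset.mem_union] at he
    rcases he with he | he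
    · have := (Finset.mem_sdiff.1 he).1
      rw [hEP, List.mem_toFinset] at this
      exact hPA e this
    · rw [Finset.mem_sdiff] at he
      have := hQA' e he.1
      rw [hA', mem_reverseAlong] at this
      rcases this with ⟨h1, _⟩ | h2
      · exact h1
      · exact absurd (mem_image_swap.2 h2) he.2
  have hdisj : Disjoint (EP \ Cp) (EQ \ EP.image Prod.swap) := by
    rw [Finset.disjoint_left]
    intro e he1 he2
    rw [Finset.mem_sdiff] at he1 he2
    have := hQA' e he2.1
    rw [hA', mem_reverseAlong] at this
    rcases this with ⟨_, h2⟩ | h2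
    · exact h2 he1.1
    · exact he2.2 (mem_image_swap.2 h2)
  have hQswap : EQ ∩ EP.image Prod.swap = Cp.image Prod.swap := by
    ext e
    rw [Finset.mem_inter, mem_image_swap, hCp, mem_image_swap, Finset.mem_inter, mem_image_swap]
    simp only [Prod.swap_swap]
    tauto
  have hbalF : ∀ w, bal F w = bal EP w + bal EQ w := by
    intro w
    rw [hF, bal_union hdisj, bal_sdiff (Finset.inter_subset_left) w]
    have h2 : EQ \ EP.image Prod.swap = EQ \ (EQ ∩ EP.image Prod.swap) := by
      rw [Finset.sdiff_inter_self_left]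
    rw [h2, bal_sdiff (Finset.inter_subset_left) w, hQswap, bal_swap]
    ring
  have hbalP : ∀ w, bal EP w = (if w = z then 1 else 0) - (if w = v then 1 else 0) :=
    fun w => bal_path hP0 hP1 hP2 hPnd hne w
  have hbalQ : ∀ w, bal EQ w = (if w = z then 1 else 0) - (if w = v then 1 else 0) :=
    fun w => bal_path hQ0 hQ1 hQ2 hQnd hne w
  have r1 : Relation.ReflTransGen (fun a b => (a, b) ∈ F) z v := by
    apply reach_of_bal F z v
    · intro w h1 h2
      rw [hbalF, hbalP, hbalQ]
      simp [h1, h2]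
    · rw [hbalF, hbalP, hbalQ]
      simp [hne]
  obtain ⟨p₁, h10, h11, h12, h1nd, h1c⟩ := rtg_to_path r1
  have h1A : ∀ e ∈ listArcs p₁, e ∈ F := fun e he => by
    simpa using (chain'_iff_listArcs _ p₁).1 h1c e he
  set F' : Finset (V × V) := F \ (listArcs p₁).toFinset with hF'
  have hsub1 : (listArcs p₁).toFinset ⊆ F := fun e he => h1A e (List.mem_toFinset.1 he)
  have r2 : Relation.ReflTransGen (fun a b => (a, b) ∈ F') z v := by
    apply reach_of_bal F' z v
    · intro w h1 h2
      rw [hF', bal_sdiff hsub1, hbalF, hbalP, hbalQ, bal_path h10 h11 h12 h1nd hne]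
      simp [h1, h2]
    · rw [hF', bal_sdiff hsub1, hbalF, hbalP, hbalQ, bal_path h10 h11 h12 h1nd hne]
      simp [hne]
  obtain ⟨p₂, h20, h21, h22, h2nd, h2c⟩ := rtg_to_path r2
  have h2A : ∀ e ∈ listArcs p₂, e ∈ F' := fun e he => by
    simpa using (chain'_iff_listArcs _ p₂).1 h2c e he
  refine ⟨p₁, p₂, ⟨h10, h11, h12, h1nd, ?_⟩, ⟨h20, h21, h22, h2nd, ?_⟩, ?_⟩
  · rw [chain'_iff_listArcs]
    intro e he
    simpa using hFA (h1A e he)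
  · rw [chain'_iff_listArcs]
    intro e he
    have := h2A e he
    rw [hF', Finset.mem_sdiff] at this
    simpa using hFA this.1
  · intro e he1 he2
    have := h2A e he2
    rw [hF', Finset.mem_sdiff, List.mem_toFinset] at this
    exact this.2 he1
end Menger

lemma exists_last_mem : ∀ (p : List V) (q : List V), (∃ w ∈ p, w ∈ q) →
    ∃ p1 z p2, p = p1 ++ z :: p2 ∧ z ∈ q ∧ ∀ w ∈ p2, w ∉ q := by
  intro p q h
  induction p using List.reverseRecOn with
  | nil => simp at h
  | append_singleton p' a ih =>
    by_cases ha : a ∈ q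
    · exact ⟨p', a, [], by simp, ha, by simp⟩
    · obtain ⟨w, hw, hwq⟩ := h
      rcases List.mem_append.1 hw with hw' | hw'
      · obtain ⟨p1, z, p2, hsp, hzq, hall⟩ := ih ⟨w, hw', hwq⟩
        refine ⟨p1, z, p2 ++ [a], by rw [hsp]; simp, hzq, ?_⟩
        intro w' hw'
        rcases List.mem_append.1 hw' with h | h
        · exact hall w' h
        · simp at h; rw [h]; exact ha
      · simp at hw'; rw [hw'] at hwq; exact absurd hwq ha

lemma suffix_path {A : Finset (V × V)} {u v z : V} {p1 p2 p : List V}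
    (h : IsDipath A u v p) (hsplit : p = p1 ++ z :: p2) : IsDipath A z v (z :: p2) := by
  obtain ⟨h0, h1, h2, hnd, hc⟩ := h
  refine ⟨by simp, rfl, ?_, ?_, ?_⟩
  · rw [hsplit, getLast?_suffix (by simp)] at h2; exact h2
  · exact hnd.sublist (show (z :: p2) <:+ p from ⟨p1, hsplit.symm⟩).sublist
  · exact hc.suffix ⟨p1, hsplit.symm⟩


end Aux

/-- In a strongly connected digraph, with `U` the set of vertices two-reaching `v` and `C`
a connected component of the underlying graph induced on `Uᶜ`, no vertex of `C` has
directed paths within `Uᶜ` to two distinct vertices of `C` each of which is the tail of an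
arc into `U`. -/
theorem stmt_6 {V : Type*} [Fintype V] [DecidableEq V] (A : Finset (V × V))
    (hsc : StronglyConnected A) (v : V) (U : Set V)
    (hU : U = {u : V | TwoReaches A u v})
    (C : ((underlying A).induce Uᶜ).ConnectedComponent)
    (x s t : V) (hx : x ∈ Uᶜ) (hs : s ∈ Uᶜ) (ht : t ∈ Uᶜ)
    (hxC : ((underlying A).induce Uᶜ).connectedComponentMk ⟨x, hx⟩ = C)
    (hsC : ((underlying A).induce Uᶜ).connectedComponentMk ⟨s, hs⟩ = C)
    (htC : ((underlying A).induce Uᶜ).connectedComponentMk ⟨t, ht⟩ = C)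
    (hst : s ≠ t)
    (hsU : ∃ y ∈ U, (s, y) ∈ A) (htU : ∃ y ∈ U, (t, y) ∈ A) :
    ¬(ReachesWithin A Uᶜ x s ∧ ReachesWithin A Uᶜ x t) := by
  rintro ⟨⟨p, hp, hpU⟩, ⟨q, hq, hqU⟩⟩
  obtain ⟨y, hyU, hsy⟩ := hsU
  obtain ⟨y', hy'U, hty'⟩ := htU
  have hyv : TwoReaches A y v := by rw [hU] at hyU; exact hyU
  have hy'v : TwoReaches A y' v := by rw [hU] at hy'U; exact hy'U
  have hxp : x ∈ p := List.mem_of_mem_head? (by rw [hp.2.1]; rfl)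
  have hxq : x ∈ q := List.mem_of_mem_head? (by rw [hq.2.1]; rfl)
  obtain ⟨p1, z, p2, hsplit, hzq, hp2q⟩ := Aux.exists_last_mem p q ⟨x, hxp, hxq⟩
  obtain ⟨q1, q2, hqsplit⟩ := List.append_of_mem hzq
  have hS1 : IsDipath A z s (z :: p2) := Aux.suffix_path hp hsplit
  have hS2 : IsDipath A z t (z :: q2) := Aux.suffix_path hq hqsplit
  have hzp : z ∈ p := by rw [hsplit]; simp
  have hzU : z ∈ Uᶜ := hpU z hzp
  have hp2p : ∀ w ∈ p2, w ∈ p := by intro w hw; rw [hsplit]; simp [hw]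
  have hq2q : ∀ w ∈ q2, w ∈ q := by intro w hw; rw [hqsplit]; simp [hw]
  have harc1 : ∀ e ∈ listArcs (z :: p2), e.2 ∈ p2 := by
    intro e he; simpa using Aux.snd_mem_tail he
  have harc2 : ∀ e ∈ listArcs (z :: q2), e.2 ∈ q2 := by
    intro e he; simpa using Aux.snd_mem_tail he
  -- Menger cut hypothesis at z
  have hcut : ∀ e ∈ A, Relation.ReflTransGen (fun a b => (a, b) ∈ A.erase e) z v := by
    intro e _
    have yv : Relation.ReflTransGen (fun a b => (a, b) ∈ A.erase e) y v :=
      Aux.tworeaches_erase hyv e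
    have y'v : Relation.ReflTransGen (fun a b => (a, b) ∈ A.erase e) y' v :=
      Aux.tworeaches_erase hy'v e
    by_cases hb : e ∈ listArcs (z :: p2) ∨ e = (s, y)
    · -- route through t is open
      have hnot2 : e ∉ listArcs (z :: q2) ∧ e ≠ (t, y') := by
        rcases hb with h1 | h1
        · have h2p2 : e.2 ∈ p2 := harc1 e h1
          constructor
          · intro h2
            exact hp2q e.2 h2p2 (hq2q e.2 (harc2 e h2))
          · intro h2
            have : e.2 ∈ Uᶜ := hpU e.2 (hp2p e.2 h2p2)
            rw [h2] at this
            exact this hy'U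
        · constructor
          · intro h2
            have : e.2 ∈ Uᶜ := hqU e.2 (hq2q e.2 (harc2 e h2))
            rw [h1] at this
            exact this hyU
          · intro h2
            rw [h1] at h2
            exact hst (congrArg Prod.fst h2)
      have hzt : Relation.ReflTransGen (fun a b => (a, b) ∈ A.erase e) z t :=
        Aux.dipath_rtg_erase hS2 hnot2.1
      exact (hzt.tail (Finset.mem_erase.2 ⟨fun h => hnot2.2 h.symm, hty'⟩)).trans y'v
    · push_neg at hb
      have hzs : Relation.ReflTransGen (fun a b => (a, b) ∈ A.erase e) z s :=
        Aux.dipath_rtg_erase hS1 hb.1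
      exact (hzs.tail (Finset.mem_erase.2 ⟨fun h => hb.2 h.symm, hsy⟩)).trans yv
  obtain ⟨r, hr⟩ := hsc z v
  have htwo : TwoReaches A z v := Aux.menger2 A z v (Aux.dipath_rtg hr) hcut
  apply hzU
  rw [hU]
  exact htwo
end

section
/- Let G = (V, E) be a simple undirected graph, let Λ be a strongly connected orientation of G, and let U be a nonempty proper subset of V. Then the sum over u ∈ U of the indegree of u in Λ is at least |E(G[U])| + c(G[V∖U]), where G[U] is the subgraph of G induced on U and c(G[V∖U]) is the number of connected components of the subgraph of G induced on V∖U. -/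
lemma crossing_arc {V : Type*} [DecidableEq V] (G : SimpleGraph V)
    (A : Finset (V × V)) (hor : IsOrientation G A) (U : Finset V) :
    ∀ (p : List V), p.Chain' (fun a b => (a, b) ∈ A) →
    ∀ c (hc : c ∈ ((↑U : Set V)ᶜ)), p.head? = some c →
    ∀ u, p.getLast? = some u → u ∈ U →
    ∃ x, ∃ hx : x ∈ ((↑U : Set V)ᶜ), ∃ y, (x, y) ∈ A ∧ y ∈ U ∧
      (G.induce ((↑U : Set V)ᶜ)).Reachable ⟨c, hc⟩ ⟨x, hx⟩ := by
  intro p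
  induction p with
  | nil => intro _ c hc h; simp at h
  | cons a rest ih =>
    intro hch c hc hhead u hlast hu
    have hac : a = c := by simpa using hhead
    subst hac
    match rest, hch, hlast with
    | [], _, hlast =>
      have : a = u := by simpa using hlast
      subst this
      exact absurd hu (by simpa using hc)
    | b :: rest', hch, hlast =>
      obtain ⟨hab, hch'⟩ := List.isChain_cons_cons.mp hch
      by_cases hbU : b ∈ U
      · exact ⟨a, hc, b, hab, hbU, SimpleGraph.Reachable.refl _⟩
      · have hbS : b ∈ ((↑U : Set V)ᶜ) := by simpa using hbU
        have hlast' : (b :: rest').getLast? = some u := by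
          simpa [List.getLast?_cons_cons] using hlast
        obtain ⟨x, hx, y, hxy, hyU, hreach⟩ :=
          ih hch' b hbS rfl u hlast' hu
        have hadj : (G.induce ((↑U : Set V)ᶜ)).Adj ⟨a, hc⟩ ⟨b, hbS⟩ :=
          (hor.1 a b).mpr (Or.inl hab)
        exact ⟨x, hx, y, hxy, hyU, hadj.reachable.trans hreach⟩

/-- For a strongly connected orientation `A` of a simple graph `G` and a nonempty proper
vertex subset `U`, the sum of indegrees over `U` is at least the number of edges of
`G[U]` plus the number of connected components of `G[V ∖ U]`. -/
theorem stmt_8 {V : Type*} [Fintype V] [DecidableEq V] (G : SimpleGraph V)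
    (A : Finset (V × V)) (hor : IsOrientation G A) (hsc : StronglyConnected A)
    (U : Finset V) (hne : U.Nonempty) (hproper : U ≠ Finset.univ) :
    Nat.card (G.induce (↑U : Set V)).edgeSet +
        Nat.card ((G.induce ((↑U : Set V)ᶜ)).ConnectedComponent) ≤
      ∑ u ∈ U, inDeg A u := by
  classical
  set B : Finset (V × V) := A.filter (fun e => e.2 ∈ U) with hB
  set B1 : Finset (V × V) := B.filter (fun e => e.1 ∈ U) with hB1
  set B2 : Finset (V × V) := B.filter (fun e => ¬ e.1 ∈ U) with hB2
  -- sum of indegrees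
  have hsum : ∑ u ∈ U, inDeg A u = B.card := by
    have hfib : B.card = ∑ u ∈ U, (B.filter (fun e => e.2 = u)).card :=
      Finset.card_eq_sum_card_fiberwise (fun e he => (Finset.mem_filter.mp he).2)
    rw [hfib]
    refine Finset.sum_congr rfl fun u hu => ?_
    unfold inDeg
    rw [hB, Finset.filter_filter]
    congr 1
    ext e
    simp only [Finset.mem_filter]
    constructor
    · rintro ⟨h1, h2⟩; exact ⟨h1, by rw [h2]; exact hu, h2⟩
    · rintro ⟨h1, _, h2⟩; exact ⟨h1, h2⟩
  have hsplit : B1.card + B2.card = B.card :=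
    Finset.card_filter_add_card_filter_not _
  -- edges bound
  have h1 : Nat.card (G.induce (↑U : Set V)).edgeSet ≤ B1.card := by
    have memB1 : ∀ e ∈ B1, e ∈ A ∧ e.1 ∈ U ∧ e.2 ∈ U := by
      intro e he
      have h := Finset.mem_filter.mp he
      have h' := Finset.mem_filter.mp h.1
      exact ⟨h'.1, h.2, h'.2⟩
    let f : B1 → (G.induce (↑U : Set V)).edgeSet := fun e =>
      ⟨s(⟨e.1.1, Finset.mem_coe.mpr (memB1 e.1 e.2).2.1⟩,
        ⟨e.1.2, Finset.mem_coe.mpr (memB1 e.1 e.2).2.2⟩),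
        (hor.1 e.1.1 e.1.2).mpr (Or.inl (memB1 e.1 e.2).1)⟩
    have hsurj : Function.Surjective f := by
      rintro ⟨e, he⟩
      induction e using Sym2.ind with
      | _ x y =>
        have hadj : G.Adj x.1 y.1 := he
        rcases (hor.1 x.1 y.1).mp hadj with h | h
        · refine ⟨⟨(x.1, y.1), ?_⟩, ?_⟩
          · exact Finset.mem_filter.mpr ⟨Finset.mem_filter.mpr ⟨h, y.2⟩, x.2⟩
          · apply Subtype.ext
            rfl
        · refine ⟨⟨(y.1, x.1), ?_⟩, ?_⟩
          · exact Finset.mem_filter.mpr ⟨Finset.mem_filter.mpr ⟨h, x.2⟩, y.2⟩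
          · apply Subtype.ext
            exact Sym2.eq_swap
    calc Nat.card (G.induce (↑U : Set V)).edgeSet
        ≤ Nat.card B1 := Nat.card_le_card_of_surjective f hsurj
      _ = B1.card := Nat.card_eq_finsetCard B1
  -- components bound
  have h2 : Nat.card ((G.induce ((↑U : Set V)ᶜ)).ConnectedComponent) ≤ B2.card := by
    have memB2 : ∀ e ∈ B2, e ∈ A ∧ e.1 ∈ ((↑U : Set V)ᶜ) ∧ e.2 ∈ U := by
      intro e he
      have h := Finset.mem_filter.mp he
      have h' := Finset.mem_filter.mp h.1
      exact ⟨h'.1, by simpa using h.2, h'.2⟩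
    let f : B2 → (G.induce ((↑U : Set V)ᶜ)).ConnectedComponent := fun e =>
      (G.induce ((↑U : Set V)ᶜ)).connectedComponentMk ⟨e.1.1, (memB2 e.1 e.2).2.1⟩
    have hsurj : Function.Surjective f := by
      intro C
      induction C using SimpleGraph.ConnectedComponent.ind with
      | _ v =>
        obtain ⟨c, hc⟩ := v
        obtain ⟨u, hu⟩ := hne
        obtain ⟨p, hp1, hp2, hp3, _, hp5⟩ := hsc c u
        obtain ⟨x, hx, y, hxy, hyU, hreach⟩ :=
          crossing_arc G A hor U p hp5 c hc hp2 u hp3 hu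
        refine ⟨⟨(x, y), ?_⟩, ?_⟩
        · exact Finset.mem_filter.mpr ⟨Finset.mem_filter.mpr ⟨hxy, hyU⟩, by simpa using hx⟩
        · exact (SimpleGraph.ConnectedComponent.sound hreach.symm)
    calc Nat.card ((G.induce ((↑U : Set V)ᶜ)).ConnectedComponent)
        ≤ Nat.card B2 := Nat.card_le_card_of_surjective f hsurj
      _ = B2.card := Nat.card_eq_finsetCard B2
  omega
end
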